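/- arXiv:2010.11799 — 8 statements merged into one kernel-verified Lean document; each statement's English description precedes it below -/
import Mathlib

section
/- Let 𝒜 ⊆ 𝒞 be an additive subcategory which is closed under extensions and satisfies 𝒞(a, Σ^{-1} b) = 0 for all a, b ∈ 𝒜. Then each short triangle a' →^{α'} a →^{α} a'' with a', a, a'' ∈ 𝒜 is a kernel–cokernel pair in 𝒜: α' is a kernel of α in the category 𝒜 and α is a cokernel of α' in the category 𝒜. -/
/-!
Common setup: `k` is a field, `C` an essentially small `k`-linear Hom-finite
triangulated category with split idempotents; `Σ` (suspension) is the shift by `1`.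
-/

open CategoryTheory CategoryTheory.Limits CategoryTheory.Pretriangulated

universe v u

variable {C : Type u} [Category.{v} C] [Preadditive C] [HasZeroObject C]
  [HasShift C ℤ] [∀ n : ℤ, (shiftFunctor C n).Additive] [Pretriangulated C]
  [HasBinaryBiproducts C]

/-- `c' ⟶ c ⟶ c''` is a *short triangle* if it fits into a distinguished triangle
`c' ⟶ c ⟶ c'' ⟶ Σ c'`. -/
def ShortTri {a b c : C} (f : a ⟶ b) (g : b ⟶ c) : Prop :=
  ∃ h : c ⟶ a⟦(1 : ℤ)⟧, Triangle.mk f g h ∈ distTriang C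

/-- The extension closure `⟨S⟩` of a set of objects `S`: the smallest full subcategory
(i.e. predicate on objects) containing `S` and closed under isomorphisms, finite direct
sums and extensions. -/
inductive ExtClos (S : Set C) : C → Prop
  | of {s : C} (hs : s ∈ S) : ExtClos S s
  | zero {z : C} (hz : IsZero z) : ExtClos S z
  | sum {x y : C} (hx : ExtClos S x) (hy : ExtClos S y) : ExtClos S (x ⊞ y)
  | iso {x y : C} (e : x ≅ y) (hx : ExtClos S x) : ExtClos S y
  | ext {a e b : C} (f : a ⟶ e) (g : e ⟶ b) (hT : ShortTri f g)
      (ha : ExtClos S a) (hb : ExtClos S b) : ExtClos S e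

/-- A *`w`-orthogonal collection*: a finite set `S` of objects such that each
`End(s)` is a skew field, `Hom(s,t) = 0` for distinct `s t ∈ S`, and
`Hom(s, Σ^ℓ t) = 0` for `ℓ ∈ {-w+1, …, -1}`. -/
structure IsOrthogonalCollection (w : ℤ) (S : Set C) : Prop where
  finite : S.Finite
  id_ne_zero : ∀ s ∈ S, (𝟙 s : s ⟶ s) ≠ 0
  isIso_of_ne_zero : ∀ s ∈ S, ∀ f : s ⟶ s, f ≠ 0 → IsIso f
  hom_eq_zero : ∀ s ∈ S, ∀ t ∈ S, s ≠ t → ∀ f : s ⟶ t, f = 0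
  shift_hom_eq_zero : ∀ s ∈ S, ∀ t ∈ S, ∀ ℓ : ℤ, 1 - w ≤ ℓ → ℓ ≤ -1 → ∀ f : s ⟶ t⟦ℓ⟧, f = 0

/-- `(f, g)` is a kernel–cokernel pair: `f` is a kernel of `g` and `g` is a cokernel
of `f`.  In an abelian category these are exactly the short exact sequences. -/
def IsKernelCokernelPair {A : Type*} [Category A] [Limits.HasZeroMorphisms A]
    {x y z : A} (f : x ⟶ y) (g : y ⟶ z) : Prop :=
  ∃ w : f ≫ g = 0, Nonempty (IsLimit (KernelFork.ofι f w)) ∧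
    Nonempty (IsColimit (CokernelCofork.ofπ g w))

/-- An additive subcategory (as a predicate on objects): closed under isomorphisms,
finite direct sums and direct summands. -/
structure IsAdditiveSubcat (P : C → Prop) : Prop where
  iso_closed : ∀ {x y : C}, (x ≅ y) → P x → P y
  sum_closed : ∀ {x y : C}, P x → P y → P (x ⊞ y)
  summand_closed : ∀ {x y : C}, P (x ⊞ y) → P x ∧ P y

/-- `P` is a *proper abelian subcategory* of `C`: an additive subcategory which is
abelian and whose short exact sequences (= kernel–cokernel pairs) are precisely the
short triangles of `C` with all terms in `P`. -/
structure IsProperAbelianSub (P : C → Prop) : Prop where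
  additive : IsAdditiveSubcat P
  abelian : Nonempty (Abelian (ObjectProperty.FullSubcategory P))
  ses_iff_shortTri : ∀ (x y z : ObjectProperty.FullSubcategory P) (f : x ⟶ y) (g : y ⟶ z),
    IsKernelCokernelPair f g ↔ ShortTri (show x.obj ⟶ y.obj from f.hom) (show y.obj ⟶ z.obj from g.hom)

/-- Finite length object in a category with zero morphisms: built from the zero object
by finitely many short exact sequences (kernel–cokernel pairs) with simple top. -/
inductive IsFinLength {A : Type*} [Category A] [Limits.HasZeroMorphisms A] : A → Prop
  | of_isZero {x : A} (h : IsZero x) : IsFinLength x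
  | step {a x s : A} (f : a ⟶ x) (g : x ⟶ s) (hs : Simple s)
      (hkc : IsKernelCokernelPair f g) (ha : IsFinLength a) : IsFinLength x

/-- An `X`-preenvelope of `c`. -/
def IsPreenvelope (X : C → Prop) {c e : C} (γ : c ⟶ e) : Prop :=
  X e ∧ ∀ e' : C, X e' → ∀ f : c ⟶ e', ∃ φ : e ⟶ e', γ ≫ φ = f

/-- An `X`-envelope of `c`: a left minimal `X`-preenvelope. -/
def IsEnvelope (X : C → Prop) {c e : C} (γ : c ⟶ e) : Prop :=
  IsPreenvelope X γ ∧ ∀ φ : e ⟶ e, γ ≫ φ = γ → IsIso φ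

/-- An `X`-precover of `c`. -/
def IsPrecover (X : C → Prop) {x c : C} (τ : x ⟶ c) : Prop :=
  X x ∧ ∀ x' : C, X x' → ∀ f : x' ⟶ c, ∃ φ : x' ⟶ x, φ ≫ τ = f

/-- An `X`-cover of `c`: a right minimal `X`-precover. -/
def IsCover (X : C → Prop) {x c : C} (τ : x ⟶ c) : Prop :=
  IsPrecover X τ ∧ ∀ φ : x ⟶ x, φ ≫ τ = τ → IsIso φ

/-- `Σ^n P`: the closure under isomorphism of the image of `P` under the `n`-th shift. -/
def ShiftClos (n : ℤ) (P : C → Prop) : C → Prop :=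
  fun y => ∃ x : C, P x ∧ Nonempty (y ≅ x⟦n⟧)

/-- The star product `P * Q` of two classes of objects. -/
def StarProd (P Q : C → Prop) : C → Prop :=
  fun e => ∃ (a b : C) (f : a ⟶ e) (g : e ⟶ b), P a ∧ Q b ∧ ShortTri f g

/-- `SpanFiltration S n = ⟨S⟩ * Σ^{-1}⟨S⟩ * ⋯ * Σ^{-n}⟨S⟩`. -/
def SpanFiltration (S : Set C) : ℕ → C → Prop
  | 0 => ExtClos S
  | n + 1 => StarProd (SpanFiltration S n) (ShiftClos (-(n + 1 : ℤ)) (ExtClos S))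

/-- A *`w`-simple minded system*: a `w`-orthogonal collection `S` with
`C = ⟨S⟩ * Σ^{-1}⟨S⟩ * ⋯ * Σ^{-w+1}⟨S⟩`. -/
def IsSimpleMindedSystem (w : ℕ) (S : Set C) : Prop :=
  IsOrthogonalCollection (w : ℤ) S ∧ ∀ c : C, SpanFiltration S (w - 1) c

/-- A torsion pair `(T, F)` in the (proper abelian) subcategory given by `P`;
short exact sequences in `P` are the short triangles with all terms in `P`. -/
structure IsTorsionPair (P T F : C → Prop) : Prop where
  t_sub : ∀ x, T x → P x
  f_sub : ∀ x, F x → P x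
  t_iso : ∀ {x y : C}, (x ≅ y) → T x → T y
  f_iso : ∀ {x y : C}, (x ≅ y) → F x → F y
  hom_zero : ∀ t f, T t → F f → ∀ φ : t ⟶ f, φ = 0
  exists_seq : ∀ a, P a → ∃ (t f : C) (i : t ⟶ a) (p : a ⟶ f), T t ∧ F f ∧ ShortTri i p

/-- `T` is closed under subobjects in the subcategory given by `P`. -/
def ClosedUnderSubobjects (P T : C → Prop) : Prop :=
  ∀ (x y : ObjectProperty.FullSubcategory P) (f : x ⟶ y), Mono f → T y.obj → T x.obj

/-- `T` is closed under quotient objects in the subcategory given by `P`. -/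
def ClosedUnderQuotients (P T : C → Prop) : Prop :=
  ∀ (x y : ObjectProperty.FullSubcategory P) (f : x ⟶ y), Epi f → T x.obj → T y.obj

/-- `t` is a left tilt of `s` at `S'`: `t = Σ^{-1} s` for `s ∈ S'`, and otherwise `t` is
the cone of a `(Σ^{-1}⟨S'⟩)`-cover `τ : Σ^{-1}t_s ⟶ s`. -/
def LeftTiltPair (S' : Set C) (s t : C) : Prop :=
  (s ∈ S' ∧ t = s⟦(-1 : ℤ)⟧) ∨
  (s ∉ S' ∧ ∃ (u : C) (τ : u ⟶ s) (g : s ⟶ t) (h : t ⟶ u⟦(1 : ℤ)⟧),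
      IsCover (ShiftClos (-1) (ExtClos S')) τ ∧ Triangle.mk τ g h ∈ distTriang C)

/-- `L` realises the left tilt `L_{S'}(S)` of `S` at `S' ⊆ S`. -/
def IsLeftTilt (S' S : Set C) (L : C → C) : Prop := ∀ s ∈ S, LeftTiltPair S' s (L s)

/-- `t` is a right tilt of `s` at `S''`: `t = Σ s` for `s ∈ S''`, and otherwise there is
a distinguished triangle `g_s ⟶ t ⟶ s ⟶ Σ g_s` whose third map is a `(Σ⟨S''⟩)`-envelope. -/
def RightTiltPair (S'' : Set C) (s t : C) : Prop :=
  (s ∈ S'' ∧ t = s⟦(1 : ℤ)⟧) ∨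
  (s ∉ S'' ∧ ∃ (g : C) (a : g ⟶ t) (b : t ⟶ s) (γ : s ⟶ g⟦(1 : ℤ)⟧),
      IsEnvelope (ShiftClos 1 (ExtClos S'')) γ ∧ Triangle.mk a b γ ∈ distTriang C)

/-- `R` realises the right tilt `R_{S''}(S)` of `S` at `S'' ⊆ S`. -/
def IsRightTilt (S'' S : Set C) (R : C → C) : Prop := ∀ s ∈ S, RightTiltPair S'' s (R s)

/-- `C` is `(-w)`-Calabi--Yau: `Σ^{-w}` is a Serre functor, i.e. there are isomorphisms
`C(x, Σ^{-w} y) ≅ D C(y, x)` natural in `x` and `y`. -/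
def IsNegativeCalabiYau (k : Type) [Field k] (C : Type u) [Category.{v} C] [Preadditive C]
    [Linear k C] [HasShift C ℤ] (w : ℤ) : Prop :=
  ∃ η : ∀ x y : C, (x ⟶ y⟦(-w : ℤ)⟧) ≃ₗ[k] ((y ⟶ x) →ₗ[k] k),
    (∀ (x x' y : C) (f : x ⟶ x') (α : x' ⟶ y⟦(-w : ℤ)⟧) (g : y ⟶ x),
      η x y (f ≫ α) g = η x' y α (g ≫ f)) ∧
    (∀ (x y y' : C) (u : y ⟶ y') (α : x ⟶ y⟦(-w : ℤ)⟧) (g : y' ⟶ x),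
      η x y' (α ≫ (shiftFunctor C (-w : ℤ)).map u) g = η x y α (u ≫ g))

/-- Dyer. Let `𝒜 ⊆ C` be an additive subcategory closed under
extensions with `C(a, Σ⁻¹ b) = 0` for all `a, b ∈ 𝒜`.  Then each short triangle
`a' ⟶ a ⟶ a''` with all terms in `𝒜` is a kernel–cokernel pair in `𝒜`. -/
theorem statement4 {k : Type} [Field k] [Linear k C]
    [EssentiallySmall.{v} C] [IsIdempotentComplete C]
    [∀ x y : C, FiniteDimensional k (x ⟶ y)]
    (P : C → Prop) (hadd : IsAdditiveSubcat P)
    (hext : ∀ {a e b : C} (f : a ⟶ e) (g : e ⟶ b), ShortTri f g → P a → P b → P e)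
    (hneg : ∀ a b : C, P a → P b → ∀ f : a ⟶ b⟦(-1 : ℤ)⟧, f = 0)
    (x y z : ObjectProperty.FullSubcategory P) (f : x ⟶ y) (g : y ⟶ z)
    (hT : ShortTri (show x.obj ⟶ y.obj from f.hom) (show y.obj ⟶ z.obj from g.hom)) :
    IsKernelCokernelPair f g := by
  obtain ⟨h, hdt⟩ := hT
  -- The composite is zero
  have hfg : (show x.obj ⟶ y.obj from f.hom) ≫ (show y.obj ⟶ z.obj from g.hom) = 0 :=
    comp_distTriang_mor_zero₁₂ _ hdt
  -- `f` is mono (as a morphism of `C`, on maps from objects of `P`)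
  have hmono : ∀ (W : ObjectProperty.FullSubcategory P) (u : W.obj ⟶ x.obj),
      u ≫ (show x.obj ⟶ y.obj from f.hom) = 0 → u = 0 := by
    intro W u hu
    obtain ⟨v, hv⟩ := Triangle.coyoneda_exact₂ _ (inv_rot_of_distTriang _ hdt) u hu
    rw [hv, hneg W.obj z.obj W.property z.property v]
    exact zero_comp
  -- `g` is epi (on maps to objects of `P`)
  have hepi : ∀ (W : ObjectProperty.FullSubcategory P) (u : z.obj ⟶ W.obj),
      (show y.obj ⟶ z.obj from g.hom) ≫ u = 0 → u = 0 := by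
    intro W u hu
    obtain ⟨v, hv⟩ := Triangle.yoneda_exact₃ _ hdt u hu
    have hv0 : v = 0 := by
      have := ((shiftEquiv C (1 : ℤ)).toAdjunction.homEquiv x.obj W.obj).injective
        (a₁ := v) (a₂ := 0) ?_
      · exact this
      · have h2 : ((shiftEquiv C (1 : ℤ)).toAdjunction.homEquiv x.obj W.obj) 0 = 0 := by
          rw [Adjunction.homEquiv_unit]
          simp
        rw [h2]
        exact hneg x.obj W.obj x.property W.property _
    rw [hv, hv0]
    exact comp_zero
  have hfg' : f ≫ g = 0 := InducedCategory.hom_ext hfg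
  refine ⟨hfg', ⟨?_⟩, ⟨?_⟩⟩
  · refine KernelFork.IsLimit.ofι f hfg'
      (fun {W} u hu => ObjectProperty.homMk (Triangle.coyoneda_exact₂ _ hdt u.hom (congrArg (fun t => t.hom) hu)).choose)
      (fun {W} u hu => InducedCategory.hom_ext ((Triangle.coyoneda_exact₂ _ hdt u.hom (congrArg (fun t => t.hom) hu)).choose_spec).symm)
      (fun {W} u hu m hm => InducedCategory.hom_ext ?_)
    have : ((show W.obj ⟶ x.obj from m.hom) -
        (show W.obj ⟶ x.obj from (Triangle.coyoneda_exact₂ _ hdt u.hom (congrArg (fun t => t.hom) hu)).choose)) ≫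
        (show x.obj ⟶ y.obj from f.hom) = 0 := by
      rw [Preadditive.sub_comp]
      exact sub_eq_zero_of_eq ((show (show W.obj ⟶ x.obj from m.hom) ≫
        (show x.obj ⟶ y.obj from f.hom) = u.hom from congrArg (fun t => t.hom) hm).trans
        ((Triangle.coyoneda_exact₂ _ hdt u.hom (congrArg (fun t => t.hom) hu)).choose_spec))
    have := hmono W _ this
    exact sub_eq_zero.mp this
  · refine CokernelCofork.IsColimit.ofπ g hfg'
      (fun {W} u hu => ObjectProperty.homMk (Triangle.yoneda_exact₂ _ hdt u.hom (congrArg (fun t => t.hom) hu)).choose)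
      (fun {W} u hu => InducedCategory.hom_ext ((Triangle.yoneda_exact₂ _ hdt u.hom (congrArg (fun t => t.hom) hu)).choose_spec).symm)
      (fun {W} u hu m hm => InducedCategory.hom_ext ?_)
    have : (show y.obj ⟶ z.obj from g.hom) ≫
        ((show z.obj ⟶ W.obj from m.hom) -
        (show z.obj ⟶ W.obj from (Triangle.yoneda_exact₂ _ hdt u.hom (congrArg (fun t => t.hom) hu)).choose)) = 0 := by
      rw [Preadditive.comp_sub]
      exact sub_eq_zero_of_eq ((show (show y.obj ⟶ z.obj from g.hom) ≫
        (show z.obj ⟶ W.obj from m.hom) = u.hom from congrArg (fun t => t.hom) hm).trans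
        ((Triangle.yoneda_exact₂ _ hdt u.hom (congrArg (fun t => t.hom) hu)).choose_spec))
    have := hepi W _ this
    exact sub_eq_zero.mp this
end

section
/- Let 𝒜 ⊆ 𝒞 be an additive subcategory which is closed under extensions and satisfies 𝒞(a, Σ^{-1} b) = 0 for all a, b ∈ 𝒜. Let a →^{α} x, a →^{φ} a', a' →^{α'} x', x →^{φ'} x' be a commutative square in 𝒞 with all four objects a, x, a', x' in 𝒜, which is homotopy cartesian, i.e. a →^{(φ,α)} a' ⊕ x →^{(-α', φ')} x' is a short triangle. Then this square is both a pullback square and a pushout square in the category 𝒜. -/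
/-!
Common setup: `k` is a field, `C` an essentially small `k`-linear Hom-finite
triangulated category with split idempotents; `Σ` (suspension) is the shift by `1`.
-/

open CategoryTheory CategoryTheory.Limits CategoryTheory.Pretriangulated

universe v u

variable {C : Type u} [Category.{v} C] [Preadditive C] [HasZeroObject C]
  [HasShift C ℤ] [∀ n : ℤ, (shiftFunctor C n).Additive] [Pretriangulated C]
  [HasBinaryBiproducts C]

/-- Let `𝒜 ⊆ C` be an additive subcategory closed under extensions
with `C(a, Σ⁻¹ b) = 0` for all `a, b ∈ 𝒜`.  A commutative square with all four corners
in `𝒜` which is homotopy cartesian in `C` is both a pullback square and a pushout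
square in `𝒜`. -/
theorem statement5 {k : Type} [Field k] [Linear k C]
    [EssentiallySmall.{v} C] [IsIdempotentComplete C]
    [∀ x y : C, FiniteDimensional k (x ⟶ y)]
    (P : C → Prop) (hadd : IsAdditiveSubcat P)
    (hext : ∀ {a e b : C} (f : a ⟶ e) (g : e ⟶ b), ShortTri f g → P a → P b → P e)
    (hneg : ∀ a b : C, P a → P b → ∀ f : a ⟶ b⟦(-1 : ℤ)⟧, f = 0)
    (a x a' x' : C) (ha : P a) (hx : P x) (ha' : P a') (hx' : P x')
    (α : a ⟶ x) (φ : a ⟶ a') (α' : a' ⟶ x') (φ' : x ⟶ x')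
    (hcomm : α ≫ φ' = φ ≫ α')
    (hhc : ShortTri (biprod.lift φ α) (biprod.desc (-α') φ')) :
    IsPullback (show (⟨a, ha⟩ : ObjectProperty.FullSubcategory P) ⟶ ⟨x, hx⟩ from ObjectProperty.homMk α)
        (show (⟨a, ha⟩ : ObjectProperty.FullSubcategory P) ⟶ ⟨a', ha'⟩ from ObjectProperty.homMk φ)
        (show (⟨x, hx⟩ : ObjectProperty.FullSubcategory P) ⟶ ⟨x', hx'⟩ from ObjectProperty.homMk φ')
        (show (⟨a', ha'⟩ : ObjectProperty.FullSubcategory P) ⟶ ⟨x', hx'⟩ from ObjectProperty.homMk α') ∧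
    IsPushout (show (⟨a, ha⟩ : ObjectProperty.FullSubcategory P) ⟶ ⟨x, hx⟩ from ObjectProperty.homMk α)
        (show (⟨a, ha⟩ : ObjectProperty.FullSubcategory P) ⟶ ⟨a', ha'⟩ from ObjectProperty.homMk φ)
        (show (⟨x, hx⟩ : ObjectProperty.FullSubcategory P) ⟶ ⟨x', hx'⟩ from ObjectProperty.homMk φ')
        (show (⟨a', ha'⟩ : ObjectProperty.FullSubcategory P) ⟶ ⟨x', hx'⟩ from ObjectProperty.homMk α') := by
  obtain ⟨θ, hθ⟩ := hhc
  -- monomorphism part: any l : t ⟶ a with l ≫ φ = 0 and l ≫ α = 0 is zero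
  have hmono : ∀ (t : C), P t → ∀ l : t ⟶ a, l ≫ φ = 0 → l ≫ α = 0 → l = 0 := by
    intro t ht l h1 h2
    have hl : l ≫ (Triangle.mk (biprod.lift φ α) (biprod.desc (-α') φ')
        θ).invRotate.mor₂ = 0 := by
      change l ≫ biprod.lift φ α = 0
      apply biprod.hom_ext <;> simp [h1, h2]
    obtain ⟨g, hg⟩ := Triangle.coyoneda_exact₂ _ (inv_rot_of_distTriang _ hθ) l hl
    have hg0 : g = 0 := hneg t x' ht hx' g
    rw [hg, hg0]
    exact zero_comp
  -- epimorphism part: any m : x' ⟶ t with mor₂ ≫ m = 0 is zero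
  have hepi : ∀ (t : C), P t → ∀ m : x' ⟶ t, biprod.desc (-α') φ' ≫ m = 0 → m = 0 := by
    intro t ht m hm
    obtain ⟨g, hg⟩ := Triangle.yoneda_exact₃ _ hθ m hm
    have hg0 : g = 0 := by
      apply (shiftFunctor C (-1 : ℤ)).map_injective
      have h0 : (shiftFunctorCompIsoId C (1 : ℤ) (-1 : ℤ) (by ring)).inv.app a ≫
          (shiftFunctor C (-1 : ℤ)).map g = 0 :=
        hneg a t ha ht _
      have h1 : (shiftFunctorCompIsoId C (1 : ℤ) (-1 : ℤ) (by ring)).inv.app a ≫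
          (shiftFunctor C (-1 : ℤ)).map g = (shiftFunctorCompIsoId C (1 : ℤ) (-1 : ℤ) (by ring)).inv.app a ≫
          (shiftFunctor C (-1 : ℤ)).map 0 := by
        rw [h0, Functor.map_zero, comp_zero]
      exact (cancel_epi ((shiftFunctorCompIsoId C (1 : ℤ) (-1 : ℤ) (by ring)).app a).inv).1 h1
    rw [hg, hg0]
    exact comp_zero
  -- solving the universal properties
  have lift_ex : ∀ (t : C), ∀ (u : t ⟶ x) (v : t ⟶ a'), u ≫ φ' = v ≫ α' →
      ∃ l : t ⟶ a, l ≫ α = u ∧ l ≫ φ = v := by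
    intro t u v huv
    have hz : biprod.lift v u ≫ (Triangle.mk (biprod.lift φ α) (biprod.desc (-α') φ')
        θ).mor₂ = 0 := by
      change biprod.lift v u ≫ biprod.desc (-α') φ' = 0
      rw [biprod.lift_desc, Preadditive.comp_neg, huv, neg_add_cancel]
    obtain ⟨l, hl⟩ := Triangle.coyoneda_exact₂ _ hθ _ hz
    obtain ⟨l, hl⟩ : ∃ l : t ⟶ a, biprod.lift v u = l ≫ biprod.lift φ α := ⟨l, hl⟩
    refine ⟨l, ?_, ?_⟩
    · have := congrArg (fun f => f ≫ (biprod.snd : a' ⊞ x ⟶ x)) hl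
      simpa using this.symm
    · have := congrArg (fun f => f ≫ (biprod.fst : a' ⊞ x ⟶ a')) hl
      simpa using this.symm
  have desc_ex : ∀ (t : C), ∀ (u : x ⟶ t) (v : a' ⟶ t), α ≫ u = φ ≫ v →
      ∃ l : x' ⟶ t, φ' ≫ l = u ∧ α' ≫ l = v := by
    intro t u v huv
    have hz : (Triangle.mk (biprod.lift φ α) (biprod.desc (-α') φ') θ).mor₁ ≫
        biprod.desc (-v) u = 0 := by
      change biprod.lift φ α ≫ biprod.desc (-v) u = 0
      rw [biprod.lift_desc, Preadditive.comp_neg, ← huv, neg_add_cancel]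
    obtain ⟨l, hl⟩ := Triangle.yoneda_exact₂ _ hθ _ hz
    obtain ⟨l, hl⟩ : ∃ l : x' ⟶ t, biprod.desc (-v) u = biprod.desc (-α') φ' ≫ l := ⟨l, hl⟩
    refine ⟨l, ?_, ?_⟩
    · have := congrArg (fun f => (biprod.inr : x ⟶ a' ⊞ x) ≫ f) hl
      simpa using this.symm
    · have := congrArg (fun f => (biprod.inl : a' ⟶ a' ⊞ x) ≫ f) hl
      simp only [biprod.inl_desc, Triangle.mk_obj₂, Triangle.mk_mor₂,
        biprod.inl_desc_assoc, Preadditive.neg_comp] at this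
      exact neg_inj.mp this.symm
  constructor
  · -- pullback
    apply IsPullback.of_isLimit (c := PullbackCone.mk
      (show (⟨a, ha⟩ : ObjectProperty.FullSubcategory P) ⟶ ⟨x, hx⟩ from ObjectProperty.homMk α)
      (show (⟨a, ha⟩ : ObjectProperty.FullSubcategory P) ⟶ ⟨a', ha'⟩ from ObjectProperty.homMk φ) (by ext; exact hcomm))
    apply PullbackCone.IsLimit.mk
    case lift =>
      intro s
      have hcond : s.fst.hom ≫ φ' = s.snd.hom ≫ α' := congrArg (fun f => f.hom) s.condition
      exact ObjectProperty.homMk (lift_ex s.pt.obj s.fst.hom s.snd.hom hcond).choose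
    case fac_left =>
      intro s
      have hcond : s.fst.hom ≫ φ' = s.snd.hom ≫ α' := congrArg (fun f => f.hom) s.condition
      apply ObjectProperty.hom_ext
      exact (lift_ex s.pt.obj s.fst.hom s.snd.hom hcond).choose_spec.1
    case fac_right =>
      intro s
      have hcond : s.fst.hom ≫ φ' = s.snd.hom ≫ α' := congrArg (fun f => f.hom) s.condition
      apply ObjectProperty.hom_ext
      exact (lift_ex s.pt.obj s.fst.hom s.snd.hom hcond).choose_spec.2
    case uniq =>
      intro s m hm1 hm2
      have hcond : s.fst.hom ≫ φ' = s.snd.hom ≫ α' := congrArg (fun f => f.hom) s.condition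
      have hspec := (lift_ex s.pt.obj s.fst.hom s.snd.hom hcond).choose_spec
      set l := (lift_ex s.pt.obj s.fst.hom s.snd.hom hcond).choose with hldef
      have hz : (m.hom - l) = 0 := by
        apply hmono s.pt.obj s.pt.property
        · rw [Preadditive.sub_comp]
          exact sub_eq_zero_of_eq ((congrArg (fun f => f.hom) hm2).trans hspec.2.symm)
        · rw [Preadditive.sub_comp]
          exact sub_eq_zero_of_eq ((congrArg (fun f => f.hom) hm1).trans hspec.1.symm)
      apply ObjectProperty.hom_ext
      exact sub_eq_zero.mp hz
  · -- pushout
    apply IsPushout.of_isColimit (c := PushoutCocone.mk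
      (show (⟨x, hx⟩ : ObjectProperty.FullSubcategory P) ⟶ ⟨x', hx'⟩ from ObjectProperty.homMk φ')
      (show (⟨a', ha'⟩ : ObjectProperty.FullSubcategory P) ⟶ ⟨x', hx'⟩ from ObjectProperty.homMk α') (by ext; exact hcomm))
    apply PushoutCocone.IsColimit.mk
    case desc =>
      intro s
      have hcond : α ≫ s.inl.hom = φ ≫ s.inr.hom := congrArg (fun f => f.hom) s.condition
      exact ObjectProperty.homMk (desc_ex s.pt.obj s.inl.hom s.inr.hom hcond).choose
    case fac_left =>
      intro s
      have hcond : α ≫ s.inl.hom = φ ≫ s.inr.hom := congrArg (fun f => f.hom) s.condition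
      apply ObjectProperty.hom_ext
      exact (desc_ex s.pt.obj s.inl.hom s.inr.hom hcond).choose_spec.1
    case fac_right =>
      intro s
      have hcond : α ≫ s.inl.hom = φ ≫ s.inr.hom := congrArg (fun f => f.hom) s.condition
      apply ObjectProperty.hom_ext
      exact (desc_ex s.pt.obj s.inl.hom s.inr.hom hcond).choose_spec.2
    case uniq =>
      intro s m hm1 hm2
      have hcond : α ≫ s.inl.hom = φ ≫ s.inr.hom := congrArg (fun f => f.hom) s.condition
      have hspec := (desc_ex s.pt.obj s.inl.hom s.inr.hom hcond).choose_spec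
      set l := (desc_ex s.pt.obj s.inl.hom s.inr.hom hcond).choose with hldef
      have hz : (m.hom - l) = 0 := by
        apply hepi s.pt.obj s.pt.property
        apply biprod.hom_ext'
        · simp only [biprod.inl_desc_assoc, comp_zero]
          rw [Preadditive.neg_comp, Preadditive.comp_sub, neg_eq_zero]
          exact sub_eq_zero_of_eq ((congrArg (fun f => f.hom) hm2).trans hspec.2.symm)
        · simp only [biprod.inr_desc_assoc, comp_zero]
          rw [Preadditive.comp_sub]
          exact sub_eq_zero_of_eq ((congrArg (fun f => f.hom) hm1).trans hspec.1.symm)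
      apply ObjectProperty.hom_ext
      exact sub_eq_zero.mp hz
end

section
/- Let 𝒜 ⊆ 𝒞 be an additive subcategory which is closed under extensions and satisfies 𝒞(a, Σ^{-1} b) = 0 for all a, b ∈ 𝒜, and assume 𝒜 * (Σ𝒜) ⊆ (Σ𝒜) * 𝒜. Then every categorical monomorphism α: a^0 → a^1 in 𝒜 (i.e. every morphism in 𝒜 such that 𝒞(x, α): 𝒞(x, a^0) → 𝒞(x, a^1) is injective for every x ∈ 𝒜) is an inflation: the cone c of α, i.e. the object in a distinguished triangle a^0 →^{α} a^1 → c → Σa^0, lies in 𝒜. -/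
/-!
Common setup: `k` is a field, `C` an essentially small `k`-linear Hom-finite
triangulated category with split idempotents; `Σ` (suspension) is the shift by `1`.
-/

open CategoryTheory CategoryTheory.Limits CategoryTheory.Pretriangulated

universe v u

variable {C : Type u} [Category.{v} C] [Preadditive C] [HasZeroObject C]
  [HasShift C ℤ] [∀ n : ℤ, (shiftFunctor C n).Additive] [Pretriangulated C]
  [HasBinaryBiproducts C]

/-- Let `𝒜 ⊆ C` be an additive subcategory closed under extensions
with `C(a, Σ⁻¹ b) = 0` for all `a, b ∈ 𝒜`, and assume `𝒜 * (Σ𝒜) ⊆ (Σ𝒜) * 𝒜`.  Then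
every categorical monomorphism `α : a⁰ ⟶ a¹` in `𝒜` is an inflation: the cone of `α`
lies in `𝒜`. -/
theorem statement6 {k : Type} [Field k] [Linear k C]
    [EssentiallySmall.{v} C] [IsIdempotentComplete C]
    [∀ x y : C, FiniteDimensional k (x ⟶ y)]
    (P : C → Prop) (hadd : IsAdditiveSubcat P)
    (hext : ∀ {a e b : C} (f : a ⟶ e) (g : e ⟶ b), ShortTri f g → P a → P b → P e)
    (hneg : ∀ a b : C, P a → P b → ∀ f : a ⟶ b⟦(-1 : ℤ)⟧, f = 0)
    (hstar : ∀ e : C, StarProd P (ShiftClos 1 P) e → StarProd (ShiftClos 1 P) P e)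
    {a0 a1 : C} (h0 : P a0) (h1 : P a1) (α : a0 ⟶ a1)
    (hmono : ∀ x : C, P x → Function.Injective (fun u : x ⟶ a0 => u ≫ α))
    (c : C) (g : a1 ⟶ c) (h : c ⟶ a0⟦(1 : ℤ)⟧)
    (hdt : Triangle.mk α g h ∈ distTriang C) :
    P c := by

  -- Rotated triangle: (a1, c, Σa0)
  have hrot := rot_of_distTriang _ hdt
  -- c ∈ P * ΣP
  have hc : StarProd P (ShiftClos 1 P) c :=
    ⟨a1, a0⟦(1 : ℤ)⟧, g, h, h1, ⟨a0, h0, ⟨Iso.refl _⟩⟩,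
      ⟨-(shiftFunctor C (1 : ℤ)).map α, hrot⟩⟩
  obtain ⟨x1, b, f, g', hx1, hb, h', hT⟩ := hstar c hc
  obtain ⟨a', ha', ⟨e⟩⟩ := hx1
  -- f ≫ h = 0
  have hfh : f ≫ h = 0 := by
    set u : a' ⟶ a0 := (shiftFunctor C (1 : ℤ)).preimage (e.inv ≫ f ≫ h) with hu
    have hcomp : h ≫ (shiftFunctor C (1 : ℤ)).map α = 0 :=
      comp_distTriang_mor_zero₃₁ _ hdt
    have huα : u ≫ α = 0 := by
      apply (shiftFunctor C (1 : ℤ)).map_injective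
      rw [Functor.map_comp, hu, Functor.map_preimage]
      simp [reassoc_of% hcomp, hcomp]
    have hu0 : u = 0 := by
      have := hmono a' ha' (show u ≫ α = 0 ≫ α by simp [huα])
      simpa using this
    have : e.inv ≫ f ≫ h = 0 := by
      rw [← Functor.map_preimage (shiftFunctor C (1 : ℤ)) (e.inv ≫ f ≫ h), ← hu, hu0,
        Functor.map_zero]
    calc f ≫ h = e.hom ≫ e.inv ≫ f ≫ h := by simp
    _ = 0 := by rw [this, comp_zero]
  -- f factors through g, hence is zero
  obtain ⟨v, hv⟩ := Triangle.coyoneda_exact₂ _ hrot f hfh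
  have hv0 : v = 0 := by
    set v' : a'⟦(1 : ℤ)⟧ ⟶ a1 := e.inv ≫ v with hv'
    set w : a' ⟶ a1⟦(-1 : ℤ)⟧ :=
      (shiftFunctorCompIsoId C (1 : ℤ) (-1 : ℤ) (by ring)).inv.app a' ≫
        (shiftFunctor C (-1 : ℤ)).map v' with hw
    have hw0 : w = 0 := hneg a' a1 ha' h1 w
    have hmap : (shiftFunctor C (-1 : ℤ)).map v' = 0 := by
      have := congrArg (fun t => (shiftFunctorCompIsoId C (1 : ℤ) (-1 : ℤ)
        (by ring)).hom.app a' ≫ t) (hw.symm.trans hw0)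
      simpa [Iso.hom_inv_id_app_assoc] using this
    have hvz : v' = 0 := by
      apply (shiftFunctor C (-1 : ℤ)).map_injective
      rw [hmap, Functor.map_zero]
    have : v = e.hom ≫ v' := by rw [hv']; simp
    rw [this, hvz, comp_zero]; rfl
  have hf0 : f = 0 := by rw [hv, hv0, zero_comp]; rfl
  -- split the triangle: b ≅ c ⊞ x1⟦1⟧
  obtain ⟨e2, -, -⟩ := exists_iso_binaryBiproduct_of_distTriang _
    (rot_of_distTriang _ hT) (by show -(shiftFunctor C (1 : ℤ)).map f = 0; rw [hf0, Functor.map_zero, neg_zero])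
  have hPsum : P (c ⊞ x1⟦(1 : ℤ)⟧) := hadd.iso_closed e2 hb
  exact (hadd.summand_closed hPsum).1
end

section
/- Let 𝒜 ⊆ 𝒞 be an additive subcategory which is closed under extensions and satisfies 𝒞(a, Σ^{-1} b) = 0 for all a, b ∈ 𝒜, and assume that each object of 𝒜 has a (Σ𝒜)-envelope. Then for each object a ∈ 𝒜 there exists a short triangle a' → q → a with a', q ∈ 𝒜 and 𝒞(q, Σ b) = 0 for all b ∈ 𝒜; that is, the exact structure on 𝒜 whose conflations are the short triangles with all terms in 𝒜 has enough projective objects, the projective objects being exactly the p ∈ 𝒜 with 𝒞(p, Σ𝒜) = 0. -/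
/-!
Common setup: `k` is a field, `C` an essentially small `k`-linear Hom-finite
triangulated category with split idempotents; `Σ` (suspension) is the shift by `1`.
-/

open CategoryTheory CategoryTheory.Limits CategoryTheory.Pretriangulated

universe v u

variable {C : Type u} [Category.{v} C] [Preadditive C] [HasZeroObject C]
  [HasShift C ℤ] [∀ n : ℤ, (shiftFunctor C n).Additive] [Pretriangulated C]
  [HasBinaryBiproducts C]

/-- `p` is a projective object for the exact structure on the subcategory given by `P`
whose conflations are the short triangles with all terms in `P`: every conflation
induces a short exact sequence of Hom-groups out of `p`. -/
def IsExactProjective (P : C → Prop) (p : C) : Prop :=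
  P p ∧ ∀ (x' x x'' : C), P x' → P x → P x'' → ∀ (f : x' ⟶ x) (g : x ⟶ x''),
    ShortTri f g →
      Function.Injective (fun u : p ⟶ x' => u ≫ f) ∧
      (∀ v : p ⟶ x, v ≫ g = 0 → ∃ u : p ⟶ x', u ≫ f = v) ∧
      Function.Surjective (fun v : p ⟶ x => v ≫ g)

/-- Let `𝒜 ⊆ C` be an additive subcategory closed under extensions
with `C(a, Σ⁻¹ b) = 0` for all `a, b ∈ 𝒜`, and assume that every object of `𝒜` has a
`(Σ𝒜)`-envelope.  Then every `a ∈ 𝒜` admits a conflation `a' ⟶ q ⟶ a` in `𝒜` with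
`C(q, Σ𝒜) = 0`; that is, the exact structure on `𝒜` given by the short triangles has
enough projective objects, the projectives being exactly the `p ∈ 𝒜` with
`C(p, Σ𝒜) = 0`. -/
theorem statement7 {k : Type} [Field k] [Linear k C]
    [EssentiallySmall.{v} C] [IsIdempotentComplete C]
    [∀ x y : C, FiniteDimensional k (x ⟶ y)]
    (P : C → Prop) (hadd : IsAdditiveSubcat P)
    (hext : ∀ {a e b : C} (f : a ⟶ e) (g : e ⟶ b), ShortTri f g → P a → P b → P e)
    (hneg : ∀ a b : C, P a → P b → ∀ f : a ⟶ b⟦(-1 : ℤ)⟧, f = 0)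
    (henv : ∀ a : C, P a → ∃ (e : C) (γ : a ⟶ e), IsEnvelope (ShiftClos 1 P) γ) :
    (∀ a : C, P a → ∃ (a' q : C) (_ : P a') (_ : P q) (f : a' ⟶ q) (g : q ⟶ a),
      ShortTri f g ∧ ∀ b : C, P b → ∀ h : q ⟶ b⟦(1 : ℤ)⟧, h = 0) ∧
    (∀ p : C, P p →
      (IsExactProjective P p ↔ ∀ b : C, P b → ∀ h : p ⟶ b⟦(1 : ℤ)⟧, h = 0)) := by
  -- The vanishing condition implies exact projectivity.
  have key : ∀ p : C, P p → (∀ b : C, P b → ∀ h : p ⟶ b⟦(1 : ℤ)⟧, h = 0) →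
      IsExactProjective P p := by
    intro p hp hvan
    refine ⟨hp, ?_⟩
    rintro x' x x'' hx' hx hx'' f g ⟨δ, hT⟩
    refine ⟨?_, ?_, ?_⟩
    · intro u₁ u₂ hu
      have h0 : (u₁ - u₂) ≫ f = 0 := by
        simp only at hu
        rw [Preadditive.sub_comp, hu, sub_self]
      obtain ⟨w, hw⟩ := Pretriangulated.Triangle.coyoneda_exact₂ _
        (inv_rot_of_distTriang _ hT) (u₁ - u₂) h0
      have hw0 : w = 0 := hneg p x'' hp hx'' w
      rw [hw0, zero_comp] at hw
      exact sub_eq_zero.1 hw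
    · intro v hv
      obtain ⟨u, hu⟩ := Pretriangulated.Triangle.coyoneda_exact₂ _ hT v hv
      exact ⟨u, hu.symm⟩
    · intro w
      obtain ⟨v, hv⟩ := Pretriangulated.Triangle.coyoneda_exact₃ _ hT w
        (hvan x' hx' _)
      exact ⟨v, hv.symm⟩
  constructor
  · -- enough projectives
    intro a ha
    obtain ⟨e, γ, ⟨⟨hXe, hfac⟩, hmin⟩⟩ := henv a ha
    obtain ⟨a', ha', ⟨ι⟩⟩ := hXe
    set γ' : a ⟶ a'⟦(1 : ℤ)⟧ := γ ≫ ι.hom with hγ'def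
    obtain ⟨q, f₀, g₀, hT₀⟩ := Pretriangulated.distinguished_cocone_triangle₂ γ'
    have hq : P q := hext f₀ g₀ ⟨γ', hT₀⟩ ha' ha
    refine ⟨a', q, ha', hq, f₀, g₀, ⟨γ', hT₀⟩, ?_⟩
    intro b hb h
    -- Wakamatsu-style argument.  First show `f₀ ≫ h = 0`.
    obtain ⟨y, i, s, hTy⟩ := Pretriangulated.distinguished_cocone_triangle₂ (f₀ ≫ h)
    have hy : P y := hext i s ⟨f₀ ≫ h, hTy⟩ hb ha'
    have hγ'f₀ : γ' ≫ f₀⟦(1 : ℤ)⟧' = 0 :=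
      comp_distTriang_mor_zero₃₁ _ hT₀
    have hcond : γ' ≫ (f₀ ≫ h)⟦(1 : ℤ)⟧' = 0 := by
      rw [Functor.map_comp, ← Category.assoc, hγ'f₀, zero_comp]
    obtain ⟨ψ, hψ⟩ := Pretriangulated.Triangle.coyoneda_exact₁ _
      (rot_of_distTriang _ (rot_of_distTriang _ hTy)) γ' hcond
    have hψ' : γ' = ψ ≫ (-(s⟦(1 : ℤ)⟧')) := hψ
    obtain ⟨φ₀, hφ₀⟩ := hfac (y⟦(1 : ℤ)⟧) ⟨y, hy, ⟨Iso.refl _⟩⟩ ψ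
    -- minimality: `φ₀ ≫ (-(s⟦1⟧')) ≫ ι.inv` is an automorphism of `e`
    have hγρ : γ ≫ (φ₀ ≫ (-(s⟦(1 : ℤ)⟧')) ≫ ι.inv) = γ := by
      have h1 : γ ≫ φ₀ ≫ (-(s⟦(1 : ℤ)⟧')) = γ' := by
        rw [← Category.assoc, hφ₀]; exact hψ'.symm
      rw [← Category.assoc φ₀, ← Category.assoc, h1, hγ'def, Category.assoc,
        ι.hom_inv_id, Category.comp_id]
    have hiso : IsIso (φ₀ ≫ (-(s⟦(1 : ℤ)⟧')) ≫ ι.inv) := hmin _ hγρ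
    have hiso2 : IsIso (φ₀ ≫ (-(s⟦(1 : ℤ)⟧'))) := by
      have heq : φ₀ ≫ (-(s⟦(1 : ℤ)⟧')) =
          (φ₀ ≫ (-(s⟦(1 : ℤ)⟧')) ≫ ι.inv) ≫ ι.hom := by
        simp
      rw [heq]
      exact IsIso.comp_isIso
    have hsu : s⟦(1 : ℤ)⟧' ≫ (f₀ ≫ h)⟦(1 : ℤ)⟧' = 0 := by
      have hz : s ≫ f₀ ≫ h = 0 := comp_distTriang_mor_zero₂₃ _ hTy
      rw [← Functor.map_comp, hz, Functor.map_zero]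
    have hσu : (φ₀ ≫ (-(s⟦(1 : ℤ)⟧'))) ≫ (f₀ ≫ h)⟦(1 : ℤ)⟧' = 0 := by
      rw [Category.assoc, Preadditive.neg_comp, hsu, neg_zero, comp_zero]
    have hu1 : (f₀ ≫ h)⟦(1 : ℤ)⟧' = 0 := by
      rw [← cancel_epi (φ₀ ≫ (-(s⟦(1 : ℤ)⟧'))), hσu, comp_zero]
    have hfh : f₀ ≫ h = 0 := by
      apply (shiftFunctor C (1 : ℤ)).map_injective
      rw [hu1, Functor.map_zero]
    obtain ⟨v, hv⟩ := Pretriangulated.Triangle.yoneda_exact₂ _ hT₀ h hfh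
    have hv' : h = g₀ ≫ v := hv
    obtain ⟨w, hw⟩ := hfac (b⟦(1 : ℤ)⟧) ⟨b, hb, ⟨Iso.refl _⟩⟩ v
    have hg₀γ' : g₀ ≫ γ' = 0 := comp_distTriang_mor_zero₂₃ _ hT₀
    have hg₀γ : g₀ ≫ γ = 0 := by
      rw [hγ'def, ← Category.assoc] at hg₀γ'
      have h3 := hg₀γ' =≫ ι.inv
      simpa using h3
    rw [hv', ← hw, ← Category.assoc, hg₀γ, zero_comp]
  · intro p hp
    constructor
    · rintro ⟨-, hproj⟩ b hb h
      obtain ⟨y, i, s, hTy⟩ := Pretriangulated.distinguished_cocone_triangle₂ h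
      have hy : P y := hext i s ⟨h, hTy⟩ hb hp
      obtain ⟨-, -, hsurj⟩ := hproj b y p hb hy hp i s ⟨h, hTy⟩
      obtain ⟨v, hv⟩ := hsurj (𝟙 p)
      have hsh : s ≫ h = 0 := comp_distTriang_mor_zero₂₃ _ hTy
      simp only at hv
      calc h = (v ≫ s) ≫ h := by rw [hv, Category.id_comp]
        _ = 0 := by rw [Category.assoc, hsh, comp_zero]
    · exact key p hp
end

section
/- Let S be a 2-orthogonal collection in 𝒞, and let α: a^0 → a^1 be a morphism in the extension closure ⟨S⟩ such that the map 𝒞(s, α): 𝒞(s, a^0) → 𝒞(s, a^1) is injective for each s ∈ S. Then α is a categorical monomorphism in ⟨S⟩, i.e. 𝒞(a, α): 𝒞(a, a^0) → 𝒞(a, a^1) is injective for every a ∈ ⟨S⟩. -/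
/-!
Common setup: `k` is a field, `C` an essentially small `k`-linear Hom-finite
triangulated category with split idempotents; `Σ` (suspension) is the shift by `1`.
-/

open CategoryTheory CategoryTheory.Limits CategoryTheory.Pretriangulated

universe v u

variable {C : Type u} [Category.{v} C] [Preadditive C] [HasZeroObject C]
  [HasShift C ℤ] [∀ n : ℤ, (shiftFunctor C n).Additive] [Pretriangulated C]
  [HasBinaryBiproducts C]

/-- Auxiliary: if `c` has no nonzero maps to members of `S`, it has none to the
extension closure. -/
lemma extClos_hom_zero_to {S : Set C} {c : C}
    (hbase : ∀ t ∈ S, ∀ f : c ⟶ t, f = 0) :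
    ∀ {y : C}, ExtClos S y → ∀ f : c ⟶ y, f = 0 := by
  intro y hy
  induction hy with
  | of hs => exact hbase _ hs
  | zero hz => exact fun f => hz.eq_of_tgt f 0
  | sum hx hy IHx IHy =>
      intro f
      apply biprod.hom_ext
      · simpa using IHx (f ≫ biprod.fst)
      · simpa using IHy (f ≫ biprod.snd)
  | iso e hx IH =>
      intro f
      have : f ≫ e.inv = 0 := IH _
      calc f = (f ≫ e.inv) ≫ e.hom := by simp
        _ = 0 := by rw [this, zero_comp]
  | ext f g hT ha hb IHa IHb =>
      intro u
      obtain ⟨h, hdt⟩ := hT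
      obtain ⟨φ, hφ⟩ := Pretriangulated.Triangle.coyoneda_exact₂ _ hdt u (IHb _)
      rw [hφ, show φ = 0 from IHa φ]; exact zero_comp

/-- Key vanishing: `Hom(x⟦1⟧, y) = 0` for `x, y` in the extension closure of a
`2`-orthogonal collection. -/
lemma extClos_shift_hom_zero {S : Set C} (hS : IsOrthogonalCollection 2 S) :
    ∀ {x : C}, ExtClos S x → ∀ {y : C}, ExtClos S y →
      ∀ f : x⟦(1 : ℤ)⟧ ⟶ y, f = 0 := by
  intro x hx
  induction hx with
  | of hs =>
      intro y hy
      refine extClos_hom_zero_to ?_ hy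
      intro t ht f
      have hg : (shiftFunctorCompIsoId C (1 : ℤ) (-1 : ℤ) (by norm_num)).inv.app _ ≫
          (shiftFunctor C (-1 : ℤ)).map f = 0 :=
        hS.shift_hom_eq_zero _ hs _ ht (-1) (by norm_num) (by norm_num) _
      have : (shiftFunctor C (-1 : ℤ)).map f = 0 := by
        have := congrArg (fun u =>
          (shiftFunctorCompIsoId C (1 : ℤ) (-1 : ℤ) (by norm_num)).hom.app _ ≫ u) hg
        simpa using this
      exact (shiftFunctor C (-1 : ℤ)).map_injective (by simpa using this)
  | zero hz =>
      intro y hy f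
      exact ((shiftFunctor C (1 : ℤ)).map_isZero hz).eq_of_src f 0
  | sum hx' hy' IHx IHy =>
      intro y hy f
      have h1 : (shiftFunctor C (1 : ℤ)).map (biprod.inl : _ ⟶ _ ⊞ _) ≫ f = 0 := IHx hy _
      have h2 : (shiftFunctor C (1 : ℤ)).map (biprod.inr : _ ⟶ _ ⊞ _) ≫ f = 0 := IHy hy _
      calc f = (shiftFunctor C (1 : ℤ)).map (𝟙 _) ≫ f := by simp
        _ = (shiftFunctor C (1 : ℤ)).map
              (biprod.fst ≫ biprod.inl + biprod.snd ≫ biprod.inr) ≫ f := by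
            rw [biprod.total]
        _ = 0 := by
            rw [Functor.map_add, Functor.map_comp, Functor.map_comp, Preadditive.add_comp,
              Category.assoc, Category.assoc, h1, h2, comp_zero, comp_zero, add_zero]
  | iso e hx' IH =>
      intro y hy f
      have h1 : (shiftFunctor C (1 : ℤ)).map e.hom ≫ f = 0 := IH hy _
      calc f = (shiftFunctor C (1 : ℤ)).map e.inv ≫
            ((shiftFunctor C (1 : ℤ)).map e.hom ≫ f) := by
              rw [← Category.assoc, ← Functor.map_comp, e.inv_hom_id]
              simp
        _ = 0 := by rw [h1, comp_zero]
  | ext f g hT ha hb IHa IHb =>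
      intro y hy u
      obtain ⟨h, hdt⟩ := hT
      have hdt3 := rot_of_distTriang _ (rot_of_distTriang _ (rot_of_distTriang _ hdt))
      have hmor : ((Triangle.mk f g h).rotate.rotate.rotate).mor₁ ≫ u = 0 := by
        simp only [Triangle.rotate_mor₁, Triangle.rotate_mor₃, Triangle.mk_mor₁, Functor.map_neg,
          Preadditive.neg_comp, neg_eq_zero]
        exact IHa hy _
      obtain ⟨v, hv⟩ := Pretriangulated.Triangle.yoneda_exact₂ _ hdt3 u hmor
      have hv0 : v = 0 := IHb hy v
      rw [hv, hv0]; exact comp_zero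

/-- Let `S` be a `2`-orthogonal collection and `α : a⁰ ⟶ a¹` a
morphism in `⟨S⟩` such that `C(s, α)` is injective for each `s ∈ S`.  Then `α` is a
categorical monomorphism in `⟨S⟩`: `C(a, α)` is injective for every `a ∈ ⟨S⟩`. -/
theorem statement8 {k : Type} [Field k] [Linear k C]
    [EssentiallySmall.{v} C] [IsIdempotentComplete C]
    [∀ x y : C, FiniteDimensional k (x ⟶ y)]
    (S : Set C) (hS : IsOrthogonalCollection 2 S)
    {a0 a1 : C} (h0 : ExtClos S a0) (h1 : ExtClos S a1) (α : a0 ⟶ a1)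
    (hinj : ∀ s ∈ S, Function.Injective (fun u : s ⟶ a0 => u ≫ α)) :
    ∀ a : C, ExtClos S a → Function.Injective (fun u : a ⟶ a0 => u ≫ α) := by
  have key : ∀ a : C, ExtClos S a → ∀ u : a ⟶ a0, u ≫ α = 0 → u = 0 := by
    intro a ha
    induction ha with
    | of hs =>
        intro u hu
        exact hinj _ hs (show u ≫ α = (0 : _ ⟶ a0) ≫ α by rw [hu, zero_comp])
    | zero hz => exact fun u _ => hz.eq_of_src u 0
    | sum hx hy IHx IHy =>
        intro u hu
        apply biprod.hom_ext'
        · simpa using IHx (biprod.inl ≫ u) (by rw [Category.assoc, hu, comp_zero])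
        · simpa using IHy (biprod.inr ≫ u) (by rw [Category.assoc, hu, comp_zero])
    | iso e hx IH =>
        intro u hu
        have h1 : e.hom ≫ u = 0 := IH _ (by rw [Category.assoc, hu, comp_zero])
        calc u = e.inv ≫ (e.hom ≫ u) := by simp
          _ = 0 := by rw [h1, comp_zero]
    | ext f g hT ha hb IHa IHb =>
        intro u hu
        obtain ⟨h, hdt⟩ := hT
        have hfu : f ≫ u = 0 := IHa _ (by rw [Category.assoc, hu, comp_zero])
        obtain ⟨v, hv'⟩ := Pretriangulated.Triangle.yoneda_exact₂ _ hdt u hfu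
        have hv : u = g ≫ v := hv'
        have hgv : g ≫ (v ≫ α) = 0 := by
          calc g ≫ (v ≫ α) = (g ≫ v) ≫ α := (Category.assoc _ _ _).symm
            _ = u ≫ α := congrArg (fun t => t ≫ α) hv.symm
            _ = 0 := hu
        obtain ⟨w, hw⟩ := Pretriangulated.Triangle.yoneda_exact₂ _
          (rot_of_distTriang _ hdt) (v ≫ α) hgv
        have hw0 : w = 0 := extClos_shift_hom_zero hS ha h1 w
        have hv0 : v = 0 := IHb v (hw.trans (by rw [hw0]; exact comp_zero))
        rw [hv, show v = 0 from hv0]; exact comp_zero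
  intro a ha u v huv
  have huv' : u ≫ α = v ≫ α := huv
  have : (u - v) ≫ α = 0 := by
    rw [Preadditive.sub_comp, huv', sub_self]
  have := key a ha (u - v) this
  exact sub_eq_zero.mp this
end

section
/- Let S be a 2-orthogonal collection in 𝒞, so that ⟨S⟩ is a proper abelian subcategory of 𝒞. Let i be an integer and 𝒱 ⊆ ⟨S⟩ an additive subcategory which is closed under extensions in the abelian category ⟨S⟩. Then Σ^i 𝒱 is closed under extensions in the triangulated category 𝒞: if v' → e → v'' is a short triangle in 𝒞 with v', v'' ∈ Σ^i 𝒱, then e ∈ Σ^i 𝒱. -/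
/-!
Common setup: `k` is a field, `C` an essentially small `k`-linear Hom-finite
triangulated category with split idempotents; `Σ` (suspension) is the shift by `1`.
-/

open CategoryTheory CategoryTheory.Limits CategoryTheory.Pretriangulated

universe v u

variable {C : Type u} [Category.{v} C] [Preadditive C] [HasZeroObject C]
  [HasShift C ℤ] [∀ n : ℤ, (shiftFunctor C n).Additive] [Pretriangulated C]
  [HasBinaryBiproducts C]

section Aux

variable (S : Set C) (hS : IsOrthogonalCollection 2 S)

include hS in
/-- Vanishing `Hom(s, Σ⁻¹ b) = 0` for `s ∈ S`, `b ∈ ⟨S⟩`. -/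
lemma homNeg_zero_of_mem {b : C} (hb : ExtClos S b) :
    ∀ {s : C}, s ∈ S → ∀ φ : s ⟶ b⟦(-1 : ℤ)⟧, φ = 0 := by
  induction hb with
  | of ht =>
    intro s hs φ
    exact hS.shift_hom_eq_zero s hs _ ht (-1) (by norm_num) (by norm_num) φ
  | zero hz =>
    intro s hs φ
    exact (((shiftFunctor C (-1 : ℤ)).map_isZero hz).eq_of_tgt φ 0)
  | @sum x y hx hy ihx ihy =>
    intro s hs φ
    have h1 : φ ≫ (shiftFunctor C (-1 : ℤ)).map (biprod.fst : x ⊞ y ⟶ x) = 0 := ihx hs _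
    have h2 : φ ≫ (shiftFunctor C (-1 : ℤ)).map (biprod.snd : x ⊞ y ⟶ y) = 0 := ihy hs _
    calc φ = φ ≫ (shiftFunctor C (-1 : ℤ)).map (𝟙 (x ⊞ y)) := by simp
      _ = φ ≫ (shiftFunctor C (-1 : ℤ)).map
            (biprod.fst ≫ biprod.inl + biprod.snd ≫ biprod.inr) := by rw [biprod.total]
      _ = (φ ≫ (shiftFunctor C (-1 : ℤ)).map biprod.fst) ≫
              (shiftFunctor C (-1 : ℤ)).map biprod.inl +
            (φ ≫ (shiftFunctor C (-1 : ℤ)).map biprod.snd) ≫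
              (shiftFunctor C (-1 : ℤ)).map biprod.inr := by
          rw [Functor.map_add, Functor.map_comp, Functor.map_comp,
            Preadditive.comp_add, Category.assoc, Category.assoc]
      _ = 0 := by rw [h1, h2]; simp
  | iso e hx ih =>
    intro s hs φ
    have h1 : φ ≫ (shiftFunctor C (-1 : ℤ)).map e.inv = 0 := ih hs _
    calc φ = (φ ≫ (shiftFunctor C (-1 : ℤ)).map e.inv) ≫
          (shiftFunctor C (-1 : ℤ)).map e.hom := by
            rw [Category.assoc, ← Functor.map_comp]; simp
      _ = 0 := by rw [h1]; simp
  | @ext p q r f g hT ha hb iha ihb =>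
    intro s hs φ
    obtain ⟨h, mem⟩ := hT
    have memS := Pretriangulated.Triangle.shift_distinguished _ mem (-1)
    have hz : φ ≫ (shiftFunctor C (-1 : ℤ)).map g = 0 := ihb hs _
    have hφ : φ ≫ ((Pretriangulated.Triangle.shiftFunctor C (-1)).obj
        (Triangle.mk f g h)).mor₂ = 0 := by
      change φ ≫ ((-1 : ℤ).negOnePow • (shiftFunctor C (-1 : ℤ)).map g) = 0
      rw [Linear.comp_units_smul, hz, smul_zero]
    obtain ⟨ψ, hψ⟩ := Pretriangulated.Triangle.coyoneda_exact₂ _ memS φ hφ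
    rw [hψ, iha hs ψ]; exact zero_comp

include hS in
/-- Vanishing `Hom(a, Σ⁻¹ b) = 0` for `a, b ∈ ⟨S⟩`. -/
lemma homNeg_zero {a : C} (ha : ExtClos S a) :
    ∀ {b : C}, ExtClos S b → ∀ φ : a ⟶ b⟦(-1 : ℤ)⟧, φ = 0 := by
  induction ha with
  | of hs => exact fun hb φ => homNeg_zero_of_mem S hS hb hs φ
  | zero hz => exact fun _ φ => hz.eq_of_src φ 0
  | sum hx hy ihx ihy =>
    intro b hb φ
    exact biprod.hom_ext' _ _
      (by rw [ihx hb (biprod.inl ≫ φ)]; simp)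
      (by rw [ihy hb (biprod.inr ≫ φ)]; simp)
  | iso e hx ih =>
    intro b hb φ
    have h1 : e.hom ≫ φ = 0 := ih hb _
    calc φ = e.inv ≫ (e.hom ≫ φ) := by simp
      _ = 0 := by rw [h1, comp_zero]
  | ext f g hT hp hr ihp ihr =>
    intro b hb φ
    obtain ⟨h, mem⟩ := hT
    have hφ : f ≫ φ = 0 := ihp hb _
    obtain ⟨ψ, hψ⟩ := Pretriangulated.Triangle.yoneda_exact₂ (Triangle.mk f g h) mem φ hφ
    rw [hψ, ihr hb ψ]; exact comp_zero

include hS in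
/-- `Hom(Σ a, b) = 0` for `a, b ∈ ⟨S⟩`. -/
lemma homShift_zero {a b : C} (ha : ExtClos S a) (hb : ExtClos S b)
    (φ : a⟦(1 : ℤ)⟧ ⟶ b) : φ = 0 := by
  have h0 : (shiftShiftNeg a (1 : ℤ)).inv ≫ (shiftFunctor C (-1 : ℤ)).map φ = 0 :=
    homNeg_zero S hS ha hb _
  have h1 : (shiftFunctor C (-1 : ℤ)).map φ = 0 := by
    calc (shiftFunctor C (-1 : ℤ)).map φ
        = (shiftShiftNeg a (1 : ℤ)).hom ≫
            ((shiftShiftNeg a (1 : ℤ)).inv ≫ (shiftFunctor C (-1 : ℤ)).map φ) := by rw [Iso.hom_inv_id_assoc]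
      _ = 0 := by rw [h0, comp_zero]
  have := (shiftFunctor C (-1 : ℤ)).map_injective (X := a⟦(1 : ℤ)⟧) (Y := b)
  apply this
  rw [h1, Functor.map_zero]

include hS in
/-- In a distinguished triangle with outer terms in `⟨S⟩`, `f` is left-cancellable
against test objects in `⟨S⟩`. -/
lemma cancel_left_of_triangle {a e b x : C} (f : a ⟶ e) (g : e ⟶ b) (h : b ⟶ a⟦(1 : ℤ)⟧)
    (mem : Triangle.mk f g h ∈ distTriang C) (hx : ExtClos S x) (hb : ExtClos S b)
    {m m' : x ⟶ a} (hmm : m ≫ f = m' ≫ f) : m = m' := by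
  have hd : (m - m') ≫ f = 0 := by rw [Preadditive.sub_comp, hmm, sub_self]
  obtain ⟨χ, hχ⟩ := Pretriangulated.Triangle.coyoneda_exact₂ ((Triangle.mk f g h).invRotate)
    (Pretriangulated.inv_rot_of_distTriang _ mem) (m - m') hd
  rw [homNeg_zero S hS hx hb χ] at hχ
  exact sub_eq_zero.mp (hχ.trans zero_comp)

include hS in
/-- In a distinguished triangle with outer terms in `⟨S⟩`, `g` is right-cancellable
against test objects in `⟨S⟩`. -/
lemma cancel_right_of_triangle {a e b x : C} (f : a ⟶ e) (g : e ⟶ b) (h : b ⟶ a⟦(1 : ℤ)⟧)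
    (mem : Triangle.mk f g h ∈ distTriang C) (ha : ExtClos S a) (hx : ExtClos S x)
    {m m' : b ⟶ x} (hmm : g ≫ m = g ≫ m') : m = m' := by
  have hd : g ≫ (m - m') = 0 := by rw [Preadditive.comp_sub, hmm, sub_self]
  obtain ⟨χ, hχ⟩ := Pretriangulated.Triangle.yoneda_exact₃ (Triangle.mk f g h) mem (m - m') hd
  rw [homShift_zero S hS ha hx χ] at hχ
  exact sub_eq_zero.mp (hχ.trans comp_zero)

include hS in
/-- A distinguished triangle with all terms in `⟨S⟩` gives a kernel–cokernel pair in
the full subcategory `⟨S⟩`. -/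
lemma kcp_of_triangle {a e b : C} (f : a ⟶ e) (g : e ⟶ b) (h : b ⟶ a⟦(1 : ℤ)⟧)
    (mem : Triangle.mk f g h ∈ distTriang C)
    (ha : ExtClos S a) (he : ExtClos S e) (hb : ExtClos S b) :
    IsKernelCokernelPair
      (show (⟨a, ha⟩ : ObjectProperty.FullSubcategory (ExtClos S)) ⟶ ⟨e, he⟩ from
        ObjectProperty.homMk f)
      (show (⟨e, he⟩ : ObjectProperty.FullSubcategory (ExtClos S)) ⟶ ⟨b, hb⟩ from
        ObjectProperty.homMk g) := by
  have w0 : f ≫ g = 0 :=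
    Pretriangulated.comp_distTriang_mor_zero₁₂ (Triangle.mk f g h) mem
  refine ⟨ObjectProperty.hom_ext _ w0, ⟨?_⟩, ⟨?_⟩⟩
  · -- kernel
    refine KernelFork.IsLimit.ofι _ _
      (fun {W'} g' hg' => ObjectProperty.homMk (Classical.choose
        (Pretriangulated.Triangle.coyoneda_exact₂ (Triangle.mk f g h) mem
          g'.hom (congrArg (fun u => u.hom) hg')))) ?_ ?_
    · intro W' g' hg'
      exact ObjectProperty.hom_ext _ (Classical.choose_spec
        (Pretriangulated.Triangle.coyoneda_exact₂ (Triangle.mk f g h) mem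
          g'.hom (congrArg (fun u => u.hom) hg'))).symm
    · intro W' g' hg' m hm
      have hm' : m.hom ≫ f = g'.hom := congrArg (fun u => u.hom) hm
      have hlf : Classical.choose
          (Pretriangulated.Triangle.coyoneda_exact₂ (Triangle.mk f g h) mem
            g'.hom (congrArg (fun u => u.hom) hg')) ≫ f = g'.hom :=
        (Classical.choose_spec
          (Pretriangulated.Triangle.coyoneda_exact₂ (Triangle.mk f g h) mem
            g'.hom (congrArg (fun u => u.hom) hg'))).symm
      exact ObjectProperty.hom_ext _
        (cancel_left_of_triangle S hS f g h mem W'.property hb (hm'.trans hlf.symm))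
  · -- cokernel
    refine CokernelCofork.IsColimit.ofπ _ _
      (fun {Z'} g' hg' => ObjectProperty.homMk (Classical.choose
        (Pretriangulated.Triangle.yoneda_exact₂ (Triangle.mk f g h) mem
          g'.hom (congrArg (fun u => u.hom) hg')))) ?_ ?_
    · intro Z' g' hg'
      exact ObjectProperty.hom_ext _ (Classical.choose_spec
        (Pretriangulated.Triangle.yoneda_exact₂ (Triangle.mk f g h) mem
          g'.hom (congrArg (fun u => u.hom) hg'))).symm
    · intro Z' g' hg' m hm
      have hm' : g ≫ m.hom = g'.hom := congrArg (fun u => u.hom) hm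
      have hlf : g ≫ Classical.choose
          (Pretriangulated.Triangle.yoneda_exact₂ (Triangle.mk f g h) mem
            g'.hom (congrArg (fun u => u.hom) hg')) = g'.hom :=
        (Classical.choose_spec
          (Pretriangulated.Triangle.yoneda_exact₂ (Triangle.mk f g h) mem
            g'.hom (congrArg (fun u => u.hom) hg'))).symm
      exact ObjectProperty.hom_ext _
        (cancel_right_of_triangle S hS f g h mem ha Z'.property (hm'.trans hlf.symm))

end Aux

/-- Let `S` be a `2`-orthogonal collection, `i` an integer, and
`𝒱 ⊆ ⟨S⟩` an additive subcategory closed under extensions in the abelian category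
`⟨S⟩`.  Then `Σ^i 𝒱` is closed under extensions in the triangulated category `C`. -/
theorem statement11 {k : Type} [Field k] [Linear k C]
    [EssentiallySmall.{v} C] [IsIdempotentComplete C]
    [∀ x y : C, FiniteDimensional k (x ⟶ y)]
    (S : Set C) (hS : IsOrthogonalCollection 2 S) (i : ℤ)
    (V : C → Prop) (hVsub : ∀ x : C, V x → ExtClos S x) (hVadd : IsAdditiveSubcat V)
    (hVext : ∀ (x y z : ObjectProperty.FullSubcategory (ExtClos S)) (f : x ⟶ y) (g : y ⟶ z),
      IsKernelCokernelPair f g → V x.obj → V z.obj → V y.obj)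
    {v' e v'' : C} (f : v' ⟶ e) (g : e ⟶ v'') (hT : ShortTri f g)
    (h' : ShiftClos i V v') (h'' : ShiftClos i V v'') :
    ShiftClos i V e := by
  obtain ⟨h, mem⟩ := hT
  obtain ⟨x', hx', ⟨e'⟩⟩ := h'
  obtain ⟨x'', hx'', ⟨e''⟩⟩ := h''
  have memS := Pretriangulated.Triangle.shift_distinguished _ mem (-i)
  set T' := (Pretriangulated.Triangle.shiftFunctor C (-i)).obj (Triangle.mk f g h) with hT'
  have ha : V (v'⟦(-i : ℤ)⟧) :=
    hVadd.iso_closed ((shiftFunctor C (-i : ℤ)).mapIso e' ≪≫ shiftShiftNeg x' i).symm hx'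
  have hb : V (v''⟦(-i : ℤ)⟧) :=
    hVadd.iso_closed ((shiftFunctor C (-i : ℤ)).mapIso e'' ≪≫ shiftShiftNeg x'' i).symm hx''
  have haE : ExtClos S (v'⟦(-i : ℤ)⟧) := hVsub _ ha
  have hbE : ExtClos S (v''⟦(-i : ℤ)⟧) := hVsub _ hb
  have heE : ExtClos S (e⟦(-i : ℤ)⟧) :=
    ExtClos.ext T'.mor₁ T'.mor₂ ⟨T'.mor₃, memS⟩ haE hbE
  have hVe : V (e⟦(-i : ℤ)⟧) := by
    refine hVext ⟨v'⟦(-i : ℤ)⟧, haE⟩ ⟨e⟦(-i : ℤ)⟧, heE⟩ ⟨v''⟦(-i : ℤ)⟧, hbE⟩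
      (ObjectProperty.homMk T'.mor₁) (ObjectProperty.homMk T'.mor₂) ?_ ha hb
    exact kcp_of_triangle S hS T'.mor₁ T'.mor₂ T'.mor₃ memS haE heE hbE
  exact ⟨e⟦(-i : ℤ)⟧, hVe, ⟨(shiftNegShift e i).symm⟩⟩
end

section
/- Let S be a 2-orthogonal collection in 𝒞 and let (𝒯, ℱ) be a torsion pair in the abelian category ⟨S⟩ such that 𝒯 is closed under subobjects in ⟨S⟩. Assume f ∈ ℱ is a simple object of ⟨S⟩ and that there is a distinguished triangle Σ^{-1}t →^{τ} f →^{φ} g → t in which τ is a (Σ^{-1}𝒯)-cover. Then g ∈ ℱ. -/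
/-!
Common setup: `k` is a field, `C` an essentially small `k`-linear Hom-finite
triangulated category with split idempotents; `Σ` (suspension) is the shift by `1`.
-/

open CategoryTheory CategoryTheory.Limits CategoryTheory.Pretriangulated

universe v u

variable {C : Type u} [Category.{v} C] [Preadditive C] [HasZeroObject C]
  [HasShift C ℤ] [∀ n : ℤ, (shiftFunctor C n).Additive] [Pretriangulated C]
  [HasBinaryBiproducts C]

namespace S14aux
set_option linter.unusedSectionVars false

variable {S : Set C}

/-- Mono-like: no maps from `⟨S⟩` are killed. -/
def MonoLike (S : Set C) {x y : C} (σ : x ⟶ y) : Prop :=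
  ∀ ⦃z : C⦄, ExtClos S z → ∀ χ : z ⟶ x, χ ≫ σ = 0 → χ = 0

lemma isZero_shift_obj {x : C} (hx : IsZero x) (n : ℤ) : IsZero (x⟦n⟧) := by
  rw [IsZero.iff_id_eq_zero] at hx ⊢
  rw [← (shiftFunctor C n).map_id, hx, Functor.map_zero]

/-- Desuspension of a composite-vanishing condition. -/
lemma desuspend {x y w : C} (Ω : x⟦(1 : ℤ)⟧ ⟶ y⟦(1 : ℤ)⟧) (m : y ⟶ w)
    (h : Ω ≫ (shiftFunctor C (1 : ℤ)).map m = 0) :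
    ∃ ω : x ⟶ y, ω ≫ m = 0 ∧ (ω = 0 → Ω = 0) := by
  set I := shiftFunctorCompIsoId C (1 : ℤ) (-1 : ℤ) (by omega) with hI
  refine ⟨I.inv.app x ≫ (shiftFunctor C (-1 : ℤ)).map Ω ≫ I.hom.app y, ?_, ?_⟩
  · have nat : (shiftFunctor C (-1 : ℤ)).map ((shiftFunctor C (1 : ℤ)).map m) ≫ I.hom.app w
        = I.hom.app y ≫ m := by
      simpa using I.hom.naturality m
    rw [Category.assoc, Category.assoc, ← nat, ← Functor.map_comp_assoc, h,
      Functor.map_zero, zero_comp, comp_zero]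
  · intro h0
    have h1 : (shiftFunctor C (-1 : ℤ)).map Ω ≫ I.hom.app y = 0 := by
      have := congrArg (fun A => I.hom.app x ≫ A) h0
      simpa [Iso.hom_inv_id_app_assoc] using this
    have h2 : (shiftFunctor C (-1 : ℤ)).map Ω = 0 := by
      have := congrArg (fun A => A ≫ I.inv.app y) h1
      simpa using this
    exact (shiftFunctor C (-1 : ℤ)).map_injective (by rw [h2, Functor.map_zero])

lemma Vs (hS : IsOrthogonalCollection 2 S) {y : C} (hy : ExtClos S y) :
    ∀ {s : C}, s ∈ S → ∀ h : s⟦(1 : ℤ)⟧ ⟶ y, h = 0 := by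
  induction hy with
  | @of s' hs' =>
    intro s hs h
    set I := shiftFunctorCompIsoId C (1 : ℤ) (-1 : ℤ) (by omega) with hI
    have h0 : I.inv.app s ≫ (shiftFunctor C (-1 : ℤ)).map h = 0 :=
      hS.shift_hom_eq_zero s hs s' hs' (-1) (by omega) (by omega) _
    have h1 : (shiftFunctor C (-1 : ℤ)).map h = 0 := by
      have := congrArg (fun A => I.hom.app s ≫ A) h0
      simpa [Iso.hom_inv_id_app_assoc] using this
    exact (shiftFunctor C (-1 : ℤ)).map_injective (by rw [h1, Functor.map_zero])
  | @zero z hz => intro s hs h; exact hz.eq_of_tgt _ _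
  | @sum x y hx hy ihx ihy =>
    intro s hs h
    refine biprod.hom_ext _ _ ?_ ?_
    · rw [ihx hs (h ≫ biprod.fst), zero_comp]
    · rw [ihy hs (h ≫ biprod.snd), zero_comp]
  | @iso x y e hx ih =>
    intro s hs h
    have h0 : h ≫ e.inv = 0 := ih hs (h ≫ e.inv)
    rw [← Category.comp_id h, ← e.inv_hom_id, ← Category.assoc, h0, zero_comp]
  | @ext a e' b f g hT ha hb iha ihb =>
    intro s hs h
    obtain ⟨h₃, hD⟩ := hT
    have h1 : h ≫ g = 0 := ihb hs (h ≫ g)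
    obtain ⟨h', hh'⟩ := Triangle.coyoneda_exact₂ _ hD h h1
    rw [hh', iha hs h']
    exact zero_comp

lemma Vneg (hS : IsOrthogonalCollection 2 S) {x : C} (hx : ExtClos S x) :
    ∀ {y : C}, ExtClos S y → ∀ h : x ⟶ y⟦(-1 : ℤ)⟧, h = 0 := by
  induction hx with
  | @of s hs =>
    intro y hy h
    set I := shiftFunctorCompIsoId C (-1 : ℤ) (1 : ℤ) (by omega) with hI
    have h0 : (shiftFunctor C (1 : ℤ)).map h ≫ I.hom.app y = 0 := Vs hS hy hs _
    have h1 : (shiftFunctor C (1 : ℤ)).map h = 0 := by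
      have := congrArg (fun A => A ≫ I.inv.app y) h0
      simpa using this
    exact (shiftFunctor C (1 : ℤ)).map_injective (by rw [h1, Functor.map_zero])
  | @zero z hz => intro y hy h; exact hz.eq_of_src _ _
  | @sum x y hx hy ihx ihy =>
    intro w hw h
    refine biprod.hom_ext' _ _ ?_ ?_
    · rw [ihx hw (biprod.inl ≫ h), comp_zero]
    · rw [ihy hw (biprod.inr ≫ h), comp_zero]
  | @iso x y e hx ih =>
    intro w hw h
    have h0 : e.hom ≫ h = 0 := ih hw (e.hom ≫ h)
    rw [← Category.id_comp h, ← e.inv_hom_id, Category.assoc, h0, comp_zero]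
  | @ext a e' b f g hT ha hb iha ihb =>
    intro y hy h
    obtain ⟨h₃, hD⟩ := hT
    have h1 : f ≫ h = 0 := iha hy (f ≫ h)
    obtain ⟨h', hh'⟩ := Triangle.yoneda_exact₂ _ hD h h1
    rw [hh', ihb hy h']
    exact comp_zero

lemma Vpos (hS : IsOrthogonalCollection 2 S) {x y : C} (hx : ExtClos S x) (hy : ExtClos S y)
    (h : x⟦(1 : ℤ)⟧ ⟶ y) : h = 0 := by
  set I := shiftFunctorCompIsoId C (1 : ℤ) (-1 : ℤ) (by omega) with hI
  have h0 : I.inv.app x ≫ (shiftFunctor C (-1 : ℤ)).map h = 0 := Vneg hS hx hy _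
  have h1 : (shiftFunctor C (-1 : ℤ)).map h = 0 := by
    have := congrArg (fun A => I.hom.app x ≫ A) h0
    simpa [Iso.hom_inv_id_app_assoc] using this
  exact (shiftFunctor C (-1 : ℤ)).map_injective (by rw [h1, Functor.map_zero])

/-- Clean restatements of the exactness lemmas for literal triangles. -/
lemma co2 {X Y Z : C} {f : X ⟶ Y} {g : Y ⟶ Z} {h : Z ⟶ X⟦(1 : ℤ)⟧}
    (hD : Triangle.mk f g h ∈ distTriang C) {W : C} (φ : W ⟶ Y) (hφ : φ ≫ g = 0) :
    ∃ ψ : W ⟶ X, φ = ψ ≫ f :=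
  Triangle.coyoneda_exact₂ _ hD φ hφ

lemma co3 {X Y Z : C} {f : X ⟶ Y} {g : Y ⟶ Z} {h : Z ⟶ X⟦(1 : ℤ)⟧}
    (hD : Triangle.mk f g h ∈ distTriang C) {W : C} (φ : W ⟶ Z) (hφ : φ ≫ h = 0) :
    ∃ ψ : W ⟶ Y, φ = ψ ≫ g :=
  Triangle.coyoneda_exact₃ _ hD φ hφ

lemma yo2 {X Y Z : C} {f : X ⟶ Y} {g : Y ⟶ Z} {h : Z ⟶ X⟦(1 : ℤ)⟧}
    (hD : Triangle.mk f g h ∈ distTriang C) {W : C} (φ : Y ⟶ W) (hφ : f ≫ φ = 0) :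
    ∃ ψ : Z ⟶ W, φ = g ≫ ψ :=
  Triangle.yoneda_exact₂ _ hD φ hφ

lemma yo3 {X Y Z : C} {f : X ⟶ Y} {g : Y ⟶ Z} {h : Z ⟶ X⟦(1 : ℤ)⟧}
    (hD : Triangle.mk f g h ∈ distTriang C) {W : C} (φ : Z ⟶ W) (hφ : g ≫ φ = 0) :
    ∃ ψ : X⟦(1 : ℤ)⟧ ⟶ W, φ = h ≫ ψ :=
  Triangle.yoneda_exact₃ _ hD φ hφ

lemma zero₁₂ {X Y Z : C} {f : X ⟶ Y} {g : Y ⟶ Z} {h : Z ⟶ X⟦(1 : ℤ)⟧}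
    (hD : Triangle.mk f g h ∈ distTriang C) : f ≫ g = 0 :=
  comp_distTriang_mor_zero₁₂ _ hD

lemma zero₂₃ {X Y Z : C} {f : X ⟶ Y} {g : Y ⟶ Z} {h : Z ⟶ X⟦(1 : ℤ)⟧}
    (hD : Triangle.mk f g h ∈ distTriang C) : g ≫ h = 0 :=
  comp_distTriang_mor_zero₂₃ _ hD

lemma zero₃₁ {X Y Z : C} {f : X ⟶ Y} {g : Y ⟶ Z} {h : Z ⟶ X⟦(1 : ℤ)⟧}
    (hD : Triangle.mk f g h ∈ distTriang C) :
    h ≫ (shiftFunctor C (1 : ℤ)).map f = 0 :=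
  comp_distTriang_mor_zero₃₁ _ hD

/-- Kernel-vanishing against an object with no maps to `Z⟦-1⟧`. -/
lemma eq_zero_of_comp_mor₁_eq_zero {X Y Z : C} {f : X ⟶ Y} {g : Y ⟶ Z} {h : Z ⟶ X⟦(1 : ℤ)⟧}
    (hD : Triangle.mk f g h ∈ distTriang C) {W : C}
    (hW : ∀ ψ : W ⟶ Z⟦(-1 : ℤ)⟧, ψ = 0) (φ : W ⟶ X) (hφ : φ ≫ f = 0) : φ = 0 := by
  obtain ⟨ψ, hψ⟩ := Triangle.coyoneda_exact₂ _ (inv_rot_of_distTriang _ hD) φ hφ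
  have hψ0 : ψ = 0 := hW ψ
  rw [hψ, hψ0]
  exact zero_comp

lemma monoLike_of_ne_zero (hS : IsOrthogonalCollection 2 S) {y : C} (hy : ExtClos S y) :
    ∀ {s : C}, s ∈ S → ∀ σ : s ⟶ y, σ ≠ 0 → MonoLike S σ := by
  induction hy with
  | @of s' hs' =>
    intro s hs σ hσ
    by_cases hss : s = s'
    · subst hss
      have : IsIso σ := hS.isIso_of_ne_zero s hs σ hσ
      intro z hz χ hχ
      rw [← Category.comp_id χ, ← IsIso.hom_inv_id σ, ← Category.assoc, hχ, zero_comp]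
    · exact absurd (hS.hom_eq_zero s hs s' hs' hss σ) hσ
  | @zero z hz => intro s hs σ hσ; exact absurd (hz.eq_of_tgt σ 0) hσ
  | @sum x y hx hy ihx ihy =>
    intro s hs σ hσ
    by_cases h1 : σ ≫ biprod.fst = 0
    · have h2 : σ ≫ biprod.snd ≠ 0 := by
        intro h2
        exact hσ (biprod.hom_ext _ _ (by rw [h1, zero_comp]) (by rw [h2, zero_comp]))
      intro z hz χ hχ
      exact ihy hs _ h2 hz χ (by rw [← Category.assoc, hχ, zero_comp])
    · intro z hz χ hχ
      exact ihx hs _ h1 hz χ (by rw [← Category.assoc, hχ, zero_comp])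
  | @iso x y e hx ih =>
    intro s hs σ hσ
    have h1 : σ ≫ e.inv ≠ 0 := by
      intro h1
      exact hσ (by rw [← Category.comp_id σ, ← e.inv_hom_id, ← Category.assoc, h1, zero_comp])
    intro z hz χ hχ
    exact ih hs _ h1 hz χ (by rw [← Category.assoc, hχ, zero_comp])
  | @ext a e' b f g hT ha hb iha ihb =>
    intro s hs σ hσ
    obtain ⟨h₃, hD⟩ := hT
    by_cases hb0 : σ ≫ g = 0
    · obtain ⟨σa, hσa⟩ := co2 hD σ hb0
      have hσa0 : σa ≠ 0 := by
        intro h0; exact hσ (by rw [hσa, h0, zero_comp])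
      intro z hz χ hχ
      have h2 : (χ ≫ σa) ≫ f = 0 := by
        rw [Category.assoc, ← hσa, hχ]
      have h3 : χ ≫ σa = 0 :=
        eq_zero_of_comp_mor₁_eq_zero hD (fun ψ => Vneg hS hz hb ψ) (χ ≫ σa) h2
      exact iha hs σa hσa0 hz χ h3
    · intro z hz χ hχ
      exact ihb hs _ hb0 hz χ (by rw [← Category.assoc, hχ, zero_comp])

lemma exists_monoLike (hS : IsOrthogonalCollection 2 S) {x : C} (hx : ExtClos S x) :
    ¬ IsZero x → ∃ s : C, s ∈ S ∧ ∃ μ : s ⟶ x, MonoLike S μ := by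
  induction hx with
  | @of s hs =>
    intro _
    exact ⟨s, hs, 𝟙 s, fun z hz χ hχ => by simpa using hχ⟩
  | @zero z hz => intro h; exact absurd hz h
  | @sum x y hx hy ihx ihy =>
    intro hnz
    by_cases hzx : IsZero x
    · have hzy : ¬ IsZero y := by
        intro hzy
        refine hnz ?_
        rw [IsZero.iff_id_eq_zero, ← biprod.total, hzx.eq_of_tgt biprod.fst 0,
          hzy.eq_of_tgt biprod.snd 0, zero_comp, zero_comp, add_zero]
      obtain ⟨s, hs, μ, hμ⟩ := ihy hzy
      refine ⟨s, hs, μ ≫ (biprod.inr : y ⟶ x ⊞ y), fun z hz χ hχ => hμ hz χ ?_⟩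
      have h1 : χ ≫ μ = (χ ≫ (μ ≫ (biprod.inr : y ⟶ x ⊞ y))) ≫ biprod.snd := by simp
      rw [h1, hχ, zero_comp]
    · obtain ⟨s, hs, μ, hμ⟩ := ihx hzx
      refine ⟨s, hs, μ ≫ (biprod.inl : x ⟶ x ⊞ y), fun z hz χ hχ => hμ hz χ ?_⟩
      have h1 : χ ≫ μ = (χ ≫ (μ ≫ (biprod.inl : x ⟶ x ⊞ y))) ≫ biprod.fst := by simp
      rw [h1, hχ, zero_comp]
  | @iso x y e hx ih =>
    intro hnz
    have : ¬ IsZero x := fun h => hnz (h.of_iso e.symm)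
    obtain ⟨s, hs, μ, hμ⟩ := ih this
    refine ⟨s, hs, μ ≫ e.hom, fun z hz χ hχ => hμ hz χ ?_⟩
    have h1 : χ ≫ μ = (χ ≫ (μ ≫ e.hom)) ≫ e.inv := by simp
    rw [h1, hχ, zero_comp]
  | @ext a e' b f g hT ha hb iha ihb =>
    intro hnz
    obtain ⟨h₃, hD⟩ := hT
    by_cases hza : IsZero a
    · have hzb : ¬ IsZero b := fun hzb =>
        hnz (Triangle.isZero₂_of_isZero₁₃ _ hD hza hzb)
      obtain ⟨s, hs, μb, hμb⟩ := ihb hzb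
      have h1 : μb ≫ h₃ = 0 := (isZero_shift_obj hza 1).eq_of_tgt _ _
      obtain ⟨μ, hμeq⟩ := co3 hD μb h1
      exact ⟨s, hs, μ, fun z hz χ hχ =>
        hμb hz χ (by rw [hμeq, ← Category.assoc, hχ, zero_comp])⟩
    · obtain ⟨s, hs, μ, hμ⟩ := iha hza
      refine ⟨s, hs, μ ≫ f, fun z hz χ hχ => ?_⟩
      have h2 : (χ ≫ μ) ≫ f = 0 := by rw [Category.assoc]; exact hχ
      exact hμ hz χ (eq_zero_of_comp_mor₁_eq_zero hD (fun ψ => Vneg hS hz hb ψ) (χ ≫ μ) h2)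

lemma glue (hS : IsOrthogonalCollection 2 S) {s a y b : C} (hs : s ∈ S)
    (ha : ExtClos S a) (hb : ExtClos S b)
    (f : a ⟶ y) (g : y ⟶ b) (h₃ : b ⟶ a⟦(1 : ℤ)⟧)
    (hD : Triangle.mk f g h₃ ∈ distTriang C)
    (iha : ∀ {c : C} (σ' : s ⟶ a) (q' : a ⟶ c) (r' : c ⟶ s⟦(1 : ℤ)⟧),
      MonoLike S σ' → (Triangle.mk σ' q' r' ∈ distTriang C) → ExtClos S c)
    (ihb : ∀ {c : C} (σ' : s ⟶ b) (q' : b ⟶ c) (r' : c ⟶ s⟦(1 : ℤ)⟧),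
      MonoLike S σ' → (Triangle.mk σ' q' r' ∈ distTriang C) → ExtClos S c)
    {c : C} (σ : s ⟶ y) (q : y ⟶ c) (r : c ⟶ s⟦(1 : ℤ)⟧)
    (hσ : MonoLike S σ) (hdt : Triangle.mk σ q r ∈ distTriang C) :
    ExtClos S c := by
  have hyE : ExtClos S y := ExtClos.ext f g ⟨h₃, hD⟩ ha hb
  have hsE : ExtClos S s := ExtClos.of hs
  -- Hom(s⟦1⟧, c) = 0
  have hsc : ∀ ϱ : s⟦(1 : ℤ)⟧ ⟶ c, ϱ = 0 := by
    intro ϱ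
    have h1 : (ϱ ≫ r) ≫ (shiftFunctor C (1 : ℤ)).map σ = 0 := by
      rw [Category.assoc, zero₃₁ hdt, comp_zero]
    obtain ⟨ω, hω1, hω2⟩ := desuspend (ϱ ≫ r) σ h1
    have h2 : ϱ ≫ r = 0 := hω2 (hσ hsE ω hω1)
    obtain ⟨ϖ, hϖ⟩ := co3 hdt ϱ h2
    rw [hϖ, Vpos hS hsE hyE ϖ, zero_comp]
  by_cases hgb : σ ≫ g = 0
  · -- the simple maps into the subobject `a`
    obtain ⟨σa, hσa_eq⟩ := co2 hD σ hgb
    have hσa : MonoLike S σa := by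
      intro z hz χ hχ
      exact hσ hz χ (by rw [hσa_eq, ← Category.assoc, hχ, zero_comp])
    obtain ⟨ca, ua, va, hDa⟩ := distinguished_cocone_triangle σa
    have hca : ExtClos S ca := iha σa ua va hσa hDa
    obtain ⟨w₁, hw₁, hw₁v⟩ : ∃ w₁ : ca ⟶ c, ua ≫ w₁ = f ≫ q ∧
        va ≫ (shiftFunctor C (1 : ℤ)).map (𝟙 s) = w₁ ≫ r :=
      complete_distinguished_triangle_morphism _ _ hDa hdt (𝟙 s) f
      (by exact hσa_eq.symm.trans (Category.id_comp σ).symm)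
    have hw₁r : w₁ ≫ r = va := by rw [← hw₁v, CategoryTheory.Functor.map_id, Category.comp_id]
    have chase : ∀ ⦃w : C⦄, ExtClos S w → ∀ ξ : w ⟶ ca, ξ ≫ w₁ = 0 → ξ = 0 := by
      intro w hw ξ hξ
      have h1 : ξ ≫ va = 0 := by rw [← hw₁r, ← Category.assoc, hξ, zero_comp]
      obtain ⟨χ, hχ⟩ := co3 hDa ξ h1
      have h2 : (χ ≫ f) ≫ q = 0 := by
        rw [Category.assoc, ← hw₁, ← Category.assoc, ← hχ, hξ]
      obtain ⟨ς, hς⟩ := co2 hdt (χ ≫ f) h2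
      have h3 : (χ - ς ≫ σa) ≫ f = 0 := by
        rw [Preadditive.sub_comp, Category.assoc, ← hσa_eq, ← hς, sub_self]
      have h4 : χ - ς ≫ σa = 0 :=
        eq_zero_of_comp_mor₁_eq_zero hD (fun ψ => Vneg hS hw hb ψ) _ h3
      have hχeq : χ = ς ≫ σa := by rwa [sub_eq_zero] at h4
      rw [hχ, hχeq, Category.assoc, zero₁₂ hDa, comp_zero]
    obtain ⟨eb, heb⟩ := yo2 hdt g hgb
    have hweb : w₁ ≫ eb = 0 := by
      have h0 : ua ≫ (w₁ ≫ eb) = 0 := by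
        rw [← Category.assoc, hw₁, Category.assoc, ← heb, zero₁₂ hD]
      obtain ⟨ζ, hζ⟩ := yo3 hDa (w₁ ≫ eb) h0
      rw [hζ, Vpos hS hsE hb ζ, comp_zero]
    obtain ⟨z, qz, rz, hK⟩ := distinguished_cocone_triangle w₁
    obtain ⟨η, hη⟩ := yo2 hK eb hweb
    have hfqqz : f ≫ (q ≫ qz) = 0 := by
      rw [← Category.assoc, ← hw₁, Category.assoc, zero₁₂ hK, comp_zero]
    obtain ⟨η', hη'⟩ := yo2 hD (q ≫ qz) hfqqz
    have hba : η' ≫ η = 𝟙 b := by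
      have h5 : g ≫ (η' ≫ η - 𝟙 b) = 0 := by
        rw [Preadditive.comp_sub, Category.comp_id, ← Category.assoc, ← hη', Category.assoc, ← hη,
          ← heb, sub_self]
      obtain ⟨ζ₂, hζ₂⟩ := yo3 hD _ h5
      rw [Vpos hS ha hb ζ₂, comp_zero] at hζ₂
      rwa [sub_eq_zero] at hζ₂
    have hsz : ∀ ρ : s⟦(1 : ℤ)⟧ ⟶ z, ρ = 0 := by
      intro ρ
      have h1 : (ρ ≫ rz) ≫ (shiftFunctor C (1 : ℤ)).map w₁ = 0 := by
        rw [Category.assoc, zero₃₁ hK, comp_zero]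
      obtain ⟨ω, hω1, hω2⟩ := desuspend (ρ ≫ rz) w₁ h1
      have h2 : ρ ≫ rz = 0 := hω2 (chase hsE ω hω1)
      obtain ⟨ϱ, hϱ⟩ := co3 hK ρ h2
      rw [hϱ, hsc ϱ, zero_comp]
    have hebη' : eb ≫ η' = qz := by
      have h6 : q ≫ (eb ≫ η' - qz) = 0 := by
        rw [Preadditive.comp_sub, ← Category.assoc, ← heb, ← hη', sub_self]
      obtain ⟨ρ, hρ⟩ := yo3 hdt _ h6
      rw [hsz ρ, comp_zero] at hρ
      rwa [sub_eq_zero] at hρ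
    have hqze : qz ≫ (𝟙 z - η ≫ η') = 0 := by
      rw [Preadditive.comp_sub, Category.comp_id, ← Category.assoc, ← hη, hebη', sub_self]
    obtain ⟨ϑ, hϑ⟩ := yo3 hK _ hqze
    have hϑη : ϑ ≫ η = 0 := Vpos hS hca hb _
    have hϑrz : ϑ ≫ rz = 0 := by
      have h1 : (ϑ ≫ rz) ≫ (shiftFunctor C (1 : ℤ)).map w₁ = 0 := by
        rw [Category.assoc, zero₃₁ hK, comp_zero]
      obtain ⟨ω, hω1, hω2⟩ := desuspend (ϑ ≫ rz) w₁ h1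
      exact hω2 (chase hca ω hω1)
    have hϑ0 : ϑ = 0 := by
      have e1 : ϑ ≫ (𝟙 z - η ≫ η') = ϑ := by
        rw [Preadditive.comp_sub, Category.comp_id, ← Category.assoc, hϑη, zero_comp, sub_zero]
      rw [hϑ, ← Category.assoc, hϑrz, zero_comp] at e1
      exact e1.symm
    have hz1 : η ≫ η' = 𝟙 z := by
      rw [hϑ0, comp_zero, sub_eq_zero] at hϑ
      exact hϑ.symm
    have hzE : ExtClos S z := ExtClos.iso (Iso.mk η' η hba hz1 : b ≅ z) hb
    exact ExtClos.ext w₁ qz ⟨rz, hK⟩ hca hzE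
  · -- the simple maps monomorphically to the quotient `b`
    have hσb : MonoLike S (σ ≫ g) := monoLike_of_ne_zero hS hb hs _ hgb
    obtain ⟨cb, ub, vb, hDb⟩ := distinguished_cocone_triangle (σ ≫ g)
    have hcb : ExtClos S cb := ihb _ ub vb hσb hDb
    obtain ⟨ch, hch, hchv⟩ : ∃ ch : c ⟶ cb, q ≫ ch = g ≫ ub ∧
        r ≫ (shiftFunctor C (1 : ℤ)).map (𝟙 s) = ch ≫ vb :=
      complete_distinguished_triangle_morphism _ _ hdt hDb (𝟙 s) g
      (by exact (Category.id_comp _).symm)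
    have hfq : (f ≫ q) ≫ ch = 0 := by
      rw [Category.assoc, hch, ← Category.assoc, zero₁₂ hD, zero_comp]
    have chase : ∀ ⦃w : C⦄, ExtClos S w → ∀ ξ : w ⟶ a, ξ ≫ (f ≫ q) = 0 → ξ = 0 := by
      intro w hw ξ hξ
      have h2 : (ξ ≫ f) ≫ q = 0 := by rwa [Category.assoc]
      obtain ⟨ς, hς⟩ := co2 hdt (ξ ≫ f) h2
      have h3 : ς ≫ (σ ≫ g) = 0 := by
        rw [← Category.assoc, ← hς, Category.assoc, zero₁₂ hD, comp_zero]
      have hς0 : ς = 0 := hσb hw ς h3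
      have h4 : ξ ≫ f = 0 := by rw [hς, hς0, zero_comp]
      exact eq_zero_of_comp_mor₁_eq_zero hD (fun ψ => Vneg hS hw hb ψ) ξ h4
    obtain ⟨z, qz, rz, hK⟩ := distinguished_cocone_triangle (f ≫ q)
    obtain ⟨η, hη⟩ := yo2 hK ch hfq
    have h5 : f ≫ (q ≫ qz) = 0 := by rw [← Category.assoc]; exact zero₁₂ hK
    obtain ⟨ζ, hζ⟩ := yo2 hD (q ≫ qz) h5
    have h6 : (σ ≫ g) ≫ ζ = 0 := by
      rw [Category.assoc, ← hζ, ← Category.assoc, zero₁₂ hdt, zero_comp]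
    obtain ⟨η', hη'⟩ := yo2 hDb ζ h6
    have hζη : ζ ≫ η = ub := by
      have h7 : g ≫ (ζ ≫ η - ub) = 0 := by
        rw [Preadditive.comp_sub, ← Category.assoc, ← hζ, Category.assoc, ← hη, hch, sub_self]
      obtain ⟨ξ₁, hξ₁⟩ := yo3 hD _ h7
      rw [Vpos hS ha hcb ξ₁, comp_zero] at hξ₁
      rwa [sub_eq_zero] at hξ₁
    have hcbid : η' ≫ η = 𝟙 cb := by
      have h8 : ub ≫ (η' ≫ η - 𝟙 cb) = 0 := by
        rw [Preadditive.comp_sub, Category.comp_id, ← Category.assoc, ← hη', hζη, sub_self]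
      obtain ⟨ξ₂, hξ₂⟩ := yo3 hDb _ h8
      rw [Vpos hS hsE hcb ξ₂, comp_zero] at hξ₂
      rwa [sub_eq_zero] at hξ₂
    have hsz : ∀ ρ : s⟦(1 : ℤ)⟧ ⟶ z, ρ = 0 := by
      intro ρ
      have h1 : (ρ ≫ rz) ≫ (shiftFunctor C (1 : ℤ)).map (f ≫ q) = 0 := by
        rw [Category.assoc, zero₃₁ hK, comp_zero]
      obtain ⟨ω, hω1, hω2⟩ := desuspend (ρ ≫ rz) (f ≫ q) h1
      have h2 : ρ ≫ rz = 0 := hω2 (chase hsE ω hω1)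
      obtain ⟨ϱ, hϱ⟩ := co3 hK ρ h2
      rw [hϱ, hsc ϱ, zero_comp]
    have hchη' : ch ≫ η' = qz := by
      have h9 : q ≫ (ch ≫ η' - qz) = 0 := by
        rw [Preadditive.comp_sub, ← Category.assoc, hch, Category.assoc, ← hη', ← hζ, sub_self]
      obtain ⟨ρ, hρ⟩ := yo3 hdt _ h9
      rw [hsz ρ, comp_zero] at hρ
      rwa [sub_eq_zero] at hρ
    have hqze : qz ≫ (𝟙 z - η ≫ η') = 0 := by
      rw [Preadditive.comp_sub, Category.comp_id, ← Category.assoc, ← hη, hchη', sub_self]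
    obtain ⟨ϑ, hϑ⟩ := yo3 hK _ hqze
    have hϑη : ϑ ≫ η = 0 := Vpos hS ha hcb _
    have hϑrz : ϑ ≫ rz = 0 := by
      have h1 : (ϑ ≫ rz) ≫ (shiftFunctor C (1 : ℤ)).map (f ≫ q) = 0 := by
        rw [Category.assoc, zero₃₁ hK, comp_zero]
      obtain ⟨ω, hω1, hω2⟩ := desuspend (ϑ ≫ rz) (f ≫ q) h1
      exact hω2 (chase ha ω hω1)
    have hϑ0 : ϑ = 0 := by
      have e1 : ϑ ≫ (𝟙 z - η ≫ η') = ϑ := by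
        rw [Preadditive.comp_sub, Category.comp_id, ← Category.assoc, hϑη, zero_comp, sub_zero]
      rw [hϑ, ← Category.assoc, hϑrz, zero_comp] at e1
      exact e1.symm
    have hz1 : η ≫ η' = 𝟙 z := by
      rw [hϑ0, comp_zero, sub_eq_zero] at hϑ
      exact hϑ.symm
    have hzE : ExtClos S z := ExtClos.iso (Iso.mk η' η hcbid hz1 : cb ≅ z) hcb
    exact ExtClos.ext (f ≫ q) qz ⟨rz, hK⟩ ha hzE

lemma extClos_cone (hS : IsOrthogonalCollection 2 S) {y : C} (hy : ExtClos S y) :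
    ∀ {s : C}, s ∈ S → ∀ {c : C} (σ : s ⟶ y) (q : y ⟶ c) (r : c ⟶ s⟦(1 : ℤ)⟧),
      MonoLike S σ → (Triangle.mk σ q r ∈ distTriang C) → ExtClos S c := by
  induction hy with
  | @of s' hs' =>
    intro s hs c σ q r hσ hdt
    by_cases hss : s = s'
    · subst hss
      have hne : σ ≠ 0 := fun h0 =>
        hS.id_ne_zero s hs (hσ (ExtClos.of hs) (𝟙 s) (by rw [Category.id_comp, h0]))
      exact ExtClos.zero (Triangle.isZero₃_of_isIso₁ _ hdt (hS.isIso_of_ne_zero s hs σ hne))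
    · exact absurd
        (hσ (ExtClos.of hs) (𝟙 s) (by rw [Category.id_comp, hS.hom_eq_zero s hs s' hs' hss σ]))
        (hS.id_ne_zero s hs)
  | @zero z hz =>
    intro s hs c σ q r hσ hdt
    exact absurd (hσ (ExtClos.of hs) (𝟙 s) (by rw [Category.id_comp, hz.eq_of_tgt σ 0]))
      (hS.id_ne_zero s hs)
  | @sum x y hx hy ihx ihy =>
    intro s hs c σ q r hσ hdt
    exact glue hS hs hx hy biprod.inl biprod.snd 0 (binaryBiproductTriangle_distinguished x y)
      (fun σ' q' r' h1 h2 => ihx hs σ' q' r' h1 h2)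
      (fun σ' q' r' h1 h2 => ihy hs σ' q' r' h1 h2) σ q r hσ hdt
  | @iso x y e hx ih =>
    intro s hs c σ q r hσ hdt
    have hσ' : MonoLike S (σ ≫ e.inv) := by
      intro z hz χ hχ
      refine hσ hz χ ?_
      have h1 : χ ≫ σ = (χ ≫ (σ ≫ e.inv)) ≫ e.hom := by simp
      rw [h1, hχ, zero_comp]
    have hdt' : Triangle.mk (σ ≫ e.inv) (e.hom ≫ q) r ∈ distTriang C := by
      refine isomorphic_distinguished _ hdt _ ?_
      exact Triangle.isoMk _ _ (Iso.refl _) e (Iso.refl _) (by exact (by simp : (σ ≫ e.inv) ≫ e.hom = 𝟙 s ≫ σ))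
        (by exact Category.comp_id _)
        (by exact (by simp : r ≫ (shiftFunctor C (1 : ℤ)).map (𝟙 s) = 𝟙 c ≫ r))
    exact ih hs (σ ≫ e.inv) (e.hom ≫ q) r hσ' hdt'
  | @ext a e' b f g hT ha hb iha ihb =>
    intro s hs c σ q r hσ hdt
    obtain ⟨h₃, hD⟩ := hT
    exact glue hS hs ha hb f g h₃ hD
      (fun σ' q' r' h1 h2 => iha hs σ' q' r' h1 h2)
      (fun σ' q' r' h1 h2 => ihb hs σ' q' r' h1 h2) σ q r hσ hdt

lemma torsionOf_quotient (hS : IsOrthogonalCollection 2 S) {T F : C → Prop}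
    (hTF : IsTorsionPair (ExtClos S) T F) {x c : C} (hx : T x) (hc : ExtClos S c)
    (q : x ⟶ c) (hq : ∀ ⦃z : C⦄, ExtClos S z → ∀ ξ : c ⟶ z, q ≫ ξ = 0 → ξ = 0) : T c := by
  obtain ⟨tc, fc, ic, pc, htc, hfc, hsh⟩ := hTF.exists_seq c hc
  obtain ⟨hc₃, hdtc⟩ : ∃ h' : fc ⟶ tc⟦(1 : ℤ)⟧, Triangle.mk ic pc h' ∈ distTriang C := hsh
  have h0 : pc = 0 := hq (hTF.f_sub fc hfc) pc (hTF.hom_zero x fc hx hfc (q ≫ pc))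
  obtain ⟨w, hw⟩ := yo3 hdtc (𝟙 fc) (by rw [Category.comp_id]; exact h0)
  have hid : 𝟙 fc = 0 := by
    rw [hw, Vpos hS (hTF.t_sub tc htc) (hTF.f_sub fc hfc) w, comp_zero]
  have hiso : IsIso ic :=
    (Triangle.isZero₃_iff_isIso₁ _ hdtc).mp ((IsZero.iff_id_eq_zero fc).mpr hid)
  exact hTF.t_iso (asIso ic) htc

lemma mono_of_monoLike {x y : ObjectProperty.FullSubcategory (ExtClos S)} (ψ : x ⟶ y)
    (h : MonoLike S ψ.hom) : Mono ψ := by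
  refine ⟨fun {W} g₁ g₂ hg => ?_⟩
  have hg' : g₁.hom ≫ ψ.hom = g₂.hom ≫ ψ.hom := congrArg (fun k => k.hom) hg
  have h2 : (g₁.hom - g₂.hom) ≫ ψ.hom = 0 := by
    rw [Preadditive.sub_comp, hg', sub_self]
  have h3 := h W.property _ h2
  have h4 : g₁.hom = g₂.hom := by
    rwa [sub_eq_zero] at h3
  exact ObjectProperty.hom_ext _ h4

end S14aux




/-- Let `S` be a `2`-orthogonal collection and `(T, F)` a torsion
pair in the abelian category `⟨S⟩` with `T` closed under subobjects in `⟨S⟩`.  Suppose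
`f ∈ F` is a simple object of `⟨S⟩` and there is a distinguished triangle
`Σ⁻¹t ⟶ f ⟶ g ⟶ t` whose first map `τ` is a `(Σ⁻¹T)`-cover.  Then `g ∈ F`. -/
theorem statement14 {k : Type} [Field k] [Linear k C]
    [EssentiallySmall.{v} C] [IsIdempotentComplete C]
    [∀ x y : C, FiniteDimensional k (x ⟶ y)]
    (S : Set C) (hS : IsOrthogonalCollection 2 S)
    (T F : C → Prop) (hTF : IsTorsionPair (ExtClos S) T F)
    (hTsub : ClosedUnderSubobjects (ExtClos S) T)
    (f : C) (hf : ExtClos S f) (hfF : F f)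
    (hsimple : Simple (⟨f, hf⟩ : ObjectProperty.FullSubcategory (ExtClos S)))
    (u g : C) (τ : u ⟶ f) (φ : f ⟶ g) (δ : g ⟶ u⟦(1 : ℤ)⟧)
    (hdt : Triangle.mk τ φ δ ∈ distTriang C)
    (hcover : IsCover (ShiftClos (-1) T) τ) :
    F g := by
  classical
  open S14aux in
  obtain ⟨⟨hXu, hfact⟩, hmin⟩ := hcover
  obtain ⟨t, ht, ⟨eu⟩⟩ := hXu
  -- `u⟦1⟧ ≅ t`, so `u⟦1⟧` is torsion and lies in `⟨S⟩`
  have e1 : u⟦(1 : ℤ)⟧ ≅ t := (shiftFunctor C (1 : ℤ)).mapIso eu ≪≫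
    (shiftFunctorCompIsoId C (-1 : ℤ) (1 : ℤ) (by omega)).app t
  have hu1T : T (u⟦(1 : ℤ)⟧) := hTF.t_iso e1.symm ht
  have hu1E : ExtClos S (u⟦(1 : ℤ)⟧) := ExtClos.iso e1.symm (hTF.t_sub t ht)
  have hgE : ExtClos S g :=
    ExtClos.ext φ δ ⟨-((shiftFunctor C (1 : ℤ)).map τ), rot_of_distTriang _ hdt⟩ hf hu1E
  -- torsion decomposition of `g`
  obtain ⟨t', f', i, p, ht', hf', hsh⟩ := hTF.exists_seq g hgE
  obtain ⟨h₂, hdt2⟩ : ∃ h' : f' ⟶ t'⟦(1 : ℤ)⟧, Triangle.mk i p h' ∈ distTriang C := hsh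
  have ht'E : ExtClos S t' := hTF.t_sub t' ht'
  have hf'E : ExtClos S f' := hTF.f_sub f' hf'
  have hiML : MonoLike S i := by
    intro z hz χ hχ
    exact eq_zero_of_comp_mor₁_eq_zero hdt2 (fun ψ => Vneg hS hz hf'E ψ) χ hχ
  have hφML : MonoLike S φ := by
    intro z hz χ hχ
    obtain ⟨ω, hω⟩ := co2 hdt χ hχ
    have hω0 : ω = 0 := by
      have h1 : ω ≫ eu.hom = 0 := Vneg hS hz (hTF.t_sub t ht) (ω ≫ eu.hom)
      rw [← Category.comp_id ω, ← eu.hom_inv_id, ← Category.assoc, h1, zero_comp]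
    rw [hω, hω0, zero_comp]
  haveI := hsimple
  have hfid : (𝟙 f : f ⟶ f) ≠ 0 := fun h0 =>
    id_nonzero (⟨f, hf⟩ : ObjectProperty.FullSubcategory (ExtClos S)) (ObjectProperty.hom_ext _ h0)
  have hzt' : IsZero t' := by
    by_contra hnz
    obtain ⟨s, hs, μ, hμ⟩ := exists_monoLike hS ht'E hnz
    by_cases hψ0 : φ ≫ p = 0
    · -- then `f` would be a subobject of the torsion object `t'`
      obtain ⟨ψ, hψ⟩ := co2 hdt2 φ hψ0
      have hψML : MonoLike S ψ := fun z hz χ hχ =>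
        hφML hz χ (by rw [hψ, ← Category.assoc, hχ, zero_comp])
      have hmono : Mono (show (⟨f, hf⟩ : ObjectProperty.FullSubcategory (ExtClos S)) ⟶ ⟨t', ht'E⟩ from ObjectProperty.homMk ψ) :=
        mono_of_monoLike _ hψML
      have hTf : T f := hTsub ⟨f, hf⟩ ⟨t', ht'E⟩ (ObjectProperty.homMk ψ) hmono ht'
      exact hfid (hTF.hom_zero f f hTf hfF (𝟙 f))
    · -- `f` is isomorphic to some `s₀ ∈ S`
      have hfnz : ¬ IsZero f := fun h => hfid ((IsZero.iff_id_eq_zero f).mp h)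
      obtain ⟨s₀, hs₀, μf, hμf⟩ := exists_monoLike hS hf hfnz
      have hμfnz : μf ≠ 0 := fun h0 =>
        hS.id_ne_zero s₀ hs₀ (hμf (ExtClos.of hs₀) (𝟙 s₀) (by rw [Category.id_comp, h0]))
      have hmono₀ :
          Mono (show (⟨s₀, ExtClos.of hs₀⟩ : ObjectProperty.FullSubcategory (ExtClos S)) ⟶ ⟨f, hf⟩ from ObjectProperty.homMk μf) :=
        mono_of_monoLike _ hμf
      have hiso₀ :
          IsIso (show (⟨s₀, ExtClos.of hs₀⟩ : ObjectProperty.FullSubcategory (ExtClos S)) ⟶ ⟨f, hf⟩ from ObjectProperty.homMk μf) := by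
        haveI := hmono₀
        exact isIso_of_mono_of_nonzero (fun h0 => hμfnz (congrArg (fun k => k.hom) h0))
      obtain ⟨j, hj1, hj2⟩ := hiso₀
      have hjμ : (show f ⟶ s₀ from j.hom) ≫ μf = 𝟙 f := congrArg (fun k => k.hom) hj2
      have hμj : μf ≫ (show f ⟶ s₀ from j.hom) = 𝟙 s₀ := congrArg (fun k => k.hom) hj1
      -- `φ ≫ p` is mono-like
      have hψ₀s : μf ≫ (φ ≫ p) ≠ 0 := by
        intro h0
        apply hψ0
        have h1 : φ ≫ p = (show f ⟶ s₀ from j.hom) ≫ μf ≫ (φ ≫ p) := by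
          rw [← Category.assoc, hjμ, Category.id_comp]
        rw [h1, h0, comp_zero]
      have hψ₀ML' : MonoLike S (μf ≫ (φ ≫ p)) := monoLike_of_ne_zero hS hf'E hs₀ _ hψ₀s
      have hψ₀ML : MonoLike S (φ ≫ p) := by
        intro z hz χ hχ
        have h1 : (χ ≫ (show f ⟶ s₀ from j.hom)) ≫ μf ≫ (φ ≫ p) = 0 := by
          rw [Category.assoc, ← Category.assoc (show f ⟶ s₀ from j.hom), hjμ,
            Category.id_comp, hχ]
        have h2 : χ ≫ (show f ⟶ s₀ from j.hom) = 0 := hψ₀ML' hz _ h1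
        have h3 : χ = (χ ≫ (show f ⟶ s₀ from j.hom)) ≫ μf := by
          rw [Category.assoc, hjμ, Category.comp_id]
        rw [h3, h2, zero_comp]
      -- the composite `s ⟶ t' ⟶ g ⟶ u⟦1⟧` is mono-like
      have hσML : MonoLike S (μ ≫ i ≫ δ) := by
        intro z hz χ hχ
        have h1 : ((χ ≫ μ) ≫ i) ≫ δ = 0 := by
          simp only [Category.assoc]
          simpa only [Category.assoc] using hχ
        obtain ⟨ψ', hψ'⟩ := co3 hdt ((χ ≫ μ) ≫ i) h1
        have h2 : ψ' ≫ (φ ≫ p) = 0 := by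
          rw [← Category.assoc, ← hψ', Category.assoc, zero₁₂ hdt2, comp_zero]
        have hψ'0 : ψ' = 0 := hψ₀ML hz ψ' h2
        have h3 : (χ ≫ μ) ≫ i = 0 := by rw [hψ', hψ'0, zero_comp]
        exact hμ hz χ (hiML hz (χ ≫ μ) h3)
      -- cone of the composite
      obtain ⟨c, q, r, hdtc⟩ := distinguished_cocone_triangle (μ ≫ i ≫ δ)
      have hcE : ExtClos S c := extClos_cone hS hu1E hs (μ ≫ i ≫ δ) q r hσML hdtc
      have hTc : T c := by
        refine torsionOf_quotient hS hTF hu1T hcE q ?_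
        intro z hz ξ hξ
        obtain ⟨w, hw⟩ := yo3 hdtc ξ hξ
        rw [hw, Vpos hS (ExtClos.of hs) hz w, comp_zero]
      -- factor `τ` through `c⟦-1⟧` and use minimality of the cover
      have h1 : (μ ≫ i ≫ δ) ≫ (shiftFunctor C (1 : ℤ)).map τ = 0 := by
        rw [Category.assoc, Category.assoc, zero₃₁ hdt, comp_zero, comp_zero]
      obtain ⟨ε, hε⟩ := yo2 hdtc ((shiftFunctor C (1 : ℤ)).map τ) h1
      set I := shiftFunctorCompIsoId C (1 : ℤ) (-1 : ℤ) (by omega) with hI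
      set q' : u ⟶ c⟦(-1 : ℤ)⟧ := I.inv.app u ≫ (shiftFunctor C (-1 : ℤ)).map q with hq'
      set ε' : c⟦(-1 : ℤ)⟧ ⟶ f := (shiftFunctor C (-1 : ℤ)).map ε ≫ I.hom.app f with hε'
      have nat : (shiftFunctor C (-1 : ℤ)).map ((shiftFunctor C (1 : ℤ)).map τ) ≫ I.hom.app f
          = I.hom.app u ≫ τ := by
        simpa using I.hom.naturality τ
      have hfac : q' ≫ ε' = τ := by
        rw [hq', hε']
        calc (I.inv.app u ≫ (shiftFunctor C (-1 : ℤ)).map q) ≫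
              ((shiftFunctor C (-1 : ℤ)).map ε ≫ I.hom.app f)
            = I.inv.app u ≫ (shiftFunctor C (-1 : ℤ)).map (q ≫ ε) ≫ I.hom.app f := by
              rw [Functor.map_comp]
              simp only [Category.assoc]
          _ = I.inv.app u ≫ (shiftFunctor C (-1 : ℤ)).map ((shiftFunctor C (1 : ℤ)).map τ)
                ≫ I.hom.app f := by rw [← hε]
          _ = I.inv.app u ≫ I.hom.app u ≫ τ := by rw [nat]
          _ = τ := by
              rw [← Category.assoc, Iso.inv_hom_id_app]
              simp
      obtain ⟨θ, hθ⟩ := hfact (c⟦(-1 : ℤ)⟧) ⟨c, hTc, ⟨Iso.refl _⟩⟩ ε'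
      have hiso : IsIso (q' ≫ θ) := hmin (q' ≫ θ) (by rw [Category.assoc, hθ, hfac])
      have hσq : (μ ≫ i ≫ δ) ≫ q = 0 := zero₁₂ hdtc
      have hσ'q : ((shiftFunctor C (-1 : ℤ)).map (μ ≫ i ≫ δ) ≫ I.hom.app u) ≫ q' = 0 := by
        rw [hq']
        calc ((shiftFunctor C (-1 : ℤ)).map (μ ≫ i ≫ δ) ≫ I.hom.app u) ≫
              (I.inv.app u ≫ (shiftFunctor C (-1 : ℤ)).map q)
            = (shiftFunctor C (-1 : ℤ)).map (μ ≫ i ≫ δ) ≫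
                (I.hom.app u ≫ I.inv.app u) ≫ (shiftFunctor C (-1 : ℤ)).map q := by
              simp only [Category.assoc]
          _ = (shiftFunctor C (-1 : ℤ)).map (μ ≫ i ≫ δ) ≫
                (shiftFunctor C (-1 : ℤ)).map q := by
              rw [Iso.hom_inv_id_app]
              simp
          _ = 0 := by rw [← Functor.map_comp, hσq, Functor.map_zero]
      have hσ'0 : (shiftFunctor C (-1 : ℤ)).map (μ ≫ i ≫ δ) ≫ I.hom.app u = 0 := by
        have h2 : (((shiftFunctor C (-1 : ℤ)).map (μ ≫ i ≫ δ) ≫ I.hom.app u) ≫ q') ≫ θ = 0 := by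
          rw [hσ'q, zero_comp]
        have h4 : (shiftFunctor C (-1 : ℤ)).map (μ ≫ i ≫ δ) ≫ I.hom.app u
            = ((((shiftFunctor C (-1 : ℤ)).map (μ ≫ i ≫ δ) ≫ I.hom.app u) ≫ q') ≫ θ)
                ≫ inv (q' ≫ θ) := by
          rw [Category.assoc, Category.assoc, ← Category.assoc q' θ, IsIso.hom_inv_id]
          simp
        rw [h4, h2, zero_comp]
      have hσ0 : μ ≫ i ≫ δ = 0 := by
        have h2 : (shiftFunctor C (-1 : ℤ)).map (μ ≫ i ≫ δ) = 0 := by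
          have h3 := congrArg (fun A => A ≫ I.inv.app u) hσ'0
          simpa using h3
        exact (shiftFunctor C (-1 : ℤ)).map_injective (by rw [h2, Functor.map_zero])
      exact hS.id_ne_zero s hs (hσML (ExtClos.of hs) (𝟙 s) (by rw [Category.id_comp, hσ0]))
  haveI hpIso : IsIso p := (Triangle.isZero₁_iff_isIso₂ _ hdt2).mp hzt'
  exact hTF.f_iso (asIso p).symm hf'
end

section
/- Let w ≥ 2 be an integer, let 𝒞 be (−w)-Calabi–Yau, let S be a w-orthogonal collection in 𝒞, and let S', S'' ⊆ S be subsets such that each s ∈ S ∖ S' has a (Σ^{-1}⟨S'⟩)-cover and each s ∈ S ∖ S'' has a (Σ⟨S''⟩)-envelope, so that the left tilt L_{S'}(S) and the right tilt R_{S''}(S) are defined. Then: (i) the right tilt R_{Σ^{-1}S'}(L_{S'}(S)) is defined and equals S up to isomorphism of objects; (ii) the left tilt L_{ΣS''}(R_{S''}(S)) is defined and equals S up to isomorphism of objects. -/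
/-!
Common setup: `k` is a field, `C` an essentially small `k`-linear Hom-finite
triangulated category with split idempotents; `Σ` (suspension) is the shift by `1`.
-/

open CategoryTheory CategoryTheory.Limits CategoryTheory.Pretriangulated

universe v u

variable {C : Type u} [Category.{v} C] [Preadditive C] [HasZeroObject C]
  [HasShift C ℤ] [∀ n : ℤ, (shiftFunctor C n).Additive] [Pretriangulated C]
  [HasBinaryBiproducts C]

section Statement19Helpers

open CategoryTheory.Pretriangulated

lemma isIso_two_sided {x y : C} (f : x ⟶ y) (g h : y ⟶ x)
    (h1 : f ≫ g = 𝟙 x) (h2 : h ≫ f = 𝟙 y) : IsIso f := by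
  have hgh : h = g := by
    rw [← Category.comp_id h, ← h1, ← Category.assoc, h2, Category.id_comp]
  exact ⟨g, h1, by rw [← hgh, h2]⟩

/-- An automorphism-like iso given by multiplication by a unit of `ℤ`. -/
@[simps] def unitSmulIso (ε : ℤˣ) (x : C) : x ≅ x where
  hom := ε • 𝟙 x
  inv := ε • 𝟙 x
  hom_inv_id := by simp [smul_smul, Int.units_mul_self]
  inv_hom_id := by simp [smul_smul, Int.units_mul_self]

lemma ShortTri.shift {a b c : C} {f : a ⟶ b} {g : b ⟶ c} (h : ShortTri f g) (n : ℤ) :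
    ShortTri ((shiftFunctor C n).map f) ((shiftFunctor C n).map g) := by
  obtain ⟨h₀, hdt⟩ := h
  refine ⟨n.negOnePow • ((shiftFunctor C n).map h₀ ≫ (shiftFunctorComm C 1 n).hom.app a), ?_⟩
  refine Pretriangulated.isomorphic_distinguished _
    (Pretriangulated.Triangle.shift_distinguished _ hdt n) _ ?_
  refine Triangle.isoMk _ (Triangle.mk (n.negOnePow • (shiftFunctor C n).map f)
    (n.negOnePow • (shiftFunctor C n).map g)
    (n.negOnePow • (shiftFunctor C n).map h₀ ≫ (shiftFunctorComm C 1 n).hom.app a))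
    (unitSmulIso n.negOnePow ((shiftFunctor C n).obj a))
    (Iso.refl ((shiftFunctor C n).obj b))
    (unitSmulIso n.negOnePow ((shiftFunctor C n).obj c)) ?_ ?_ ?_ <;>
    (dsimp only [Triangle.mk]; simp [smul_smul, Int.units_mul_self, Units.smul_def])

lemma ExtClos.shiftSet {S₀ : Set C} (n : ℤ) {x : C} (hx : ExtClos S₀ x) :
    ExtClos ((fun s : C => s⟦n⟧) '' S₀) (x⟦n⟧) := by
  induction hx with
  | of hs => exact .of ⟨_, hs, rfl⟩
  | zero hz => exact .zero ((shiftFunctor C n).map_isZero hz)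
  | sum hx hy ihx ihy =>
      have : PreservesBinaryBiproducts (shiftFunctor C n) :=
        preservesBinaryBiproducts_of_preservesBiproducts _
      exact .iso ((shiftFunctor C n).mapBiprod _ _).symm (.sum ihx ihy)
  | iso e hx ih => exact .iso ((shiftFunctor C n).mapIso e) ih
  | ext f g hT ha hb iha ihb => exact .ext _ _ (hT.shift n) iha ihb

lemma extClos_hom_from_zero {S₀ : Set C} {a : C}
    (hgen : ∀ s₀ ∈ S₀, ∀ f : a ⟶ s₀, f = 0) {y : C} (hy : ExtClos S₀ y) :
    ∀ f : a ⟶ y, f = 0 := by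
  induction hy with
  | of hs => exact hgen _ hs
  | zero hz => exact fun f => hz.eq_of_tgt f 0
  | sum hx hy ihx ihy =>
      intro f
      apply biprod.hom_ext
      · rw [ihx (f ≫ biprod.fst), zero_comp]
      · rw [ihy (f ≫ biprod.snd), zero_comp]
  | iso e hx ih =>
      intro f
      have : f = (f ≫ e.inv) ≫ e.hom := by simp
      rw [this, ih (f ≫ e.inv), zero_comp]
  | ext f₁ g₁ hT ha hb iha ihb =>
      intro f
      obtain ⟨h₁, hdt⟩ := hT
      obtain ⟨g', hg'⟩ : ∃ g' : a ⟶ _, f = g' ≫ f₁ :=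
        Pretriangulated.Triangle.coyoneda_exact₂ _ hdt f (ihb (f ≫ g₁))
      rw [hg', iha g', zero_comp]

lemma extClos_hom_to_zero {S₀ : Set C} {c : C}
    (hgen : ∀ s₀ ∈ S₀, ∀ f : s₀ ⟶ c, f = 0) {y : C} (hy : ExtClos S₀ y) :
    ∀ f : y ⟶ c, f = 0 := by
  induction hy with
  | of hs => exact hgen _ hs
  | zero hz => exact fun f => hz.eq_of_src f 0
  | sum hx hy ihx ihy =>
      intro f
      apply biprod.hom_ext'
      · rw [ihx (biprod.inl ≫ f), comp_zero]
      · rw [ihy (biprod.inr ≫ f), comp_zero]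
  | iso e hx ih =>
      intro f
      have : f = e.inv ≫ (e.hom ≫ f) := by simp
      rw [this, ih (e.hom ≫ f), comp_zero]
  | ext f₁ g₁ hT ha hb iha ihb =>
      intro f
      obtain ⟨h₁, hdt⟩ := hT
      obtain ⟨g', hg'⟩ : ∃ g' : _ ⟶ c, f = g₁ ≫ g' :=
        Pretriangulated.Triangle.yoneda_exact₂ _ hdt f (iha (f₁ ≫ f))
      rw [hg', ihb g', comp_zero]

end Statement19Helpers

section Statement19Helpers2

open CategoryTheory.Pretriangulated

set_option linter.unusedSectionVars false

/-- Maps from `s ∈ S` into the extension closure of `Σ⁻¹ S'` vanish, when `w ≥ 2`. -/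
lemma vanish_to_shiftNeg {w : ℕ} (hw : 2 ≤ w) {S : Set C}
    (hS : IsOrthogonalCollection (w : ℤ) S) {S' : Set C} (hsub' : S' ⊆ S)
    {s : C} (hs : s ∈ S) {z : C}
    (hz : ExtClos ((fun x : C => x⟦(-1 : ℤ)⟧) '' S') z) : ∀ f : s ⟶ z, f = 0 := by
  refine extClos_hom_from_zero ?_ hz
  rintro _ ⟨s', hs', rfl⟩ f
  exact hS.shift_hom_eq_zero s hs s' (hsub' hs') (-1) (by omega) (by omega) f

/-- Maps from `s ∈ S \ S'` into `Σ (extension closure of Σ⁻¹ S')` vanish. -/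
lemma vanish_to_shiftNegShift {w : ℕ} {S : Set C}
    (hS : IsOrthogonalCollection (w : ℤ) S) {S' : Set C} (hsub' : S' ⊆ S)
    {s : C} (hs : s ∈ S) (hs' : s ∉ S') {z : C}
    (hz : ExtClos ((fun x : C => x⟦(-1 : ℤ)⟧) '' S') z) : ∀ f : s ⟶ z⟦(1 : ℤ)⟧, f = 0 := by
  have hz1 := hz.shiftSet 1
  refine extClos_hom_from_zero ?_ hz1
  rintro _ ⟨_, ⟨s', hs'', rfl⟩, rfl⟩ f
  have h0 : f ≫ (shiftFunctorCompIsoId C (-1 : ℤ) (1 : ℤ) (by omega)).hom.app s' = 0 :=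
    hS.hom_eq_zero s hs s' (hsub' hs'') (fun he => hs' (he ▸ hs'')) _
  have hf : f = (f ≫ (shiftFunctorCompIsoId C (-1 : ℤ) (1 : ℤ) (by omega)).hom.app s') ≫
      (shiftFunctorCompIsoId C (-1 : ℤ) (1 : ℤ) (by omega)).inv.app s' := by simp
  rw [hf, h0, zero_comp]

/-- Maps from the extension closure of `Σ S''` to `s ∈ S` vanish, when `w ≥ 2`. -/
lemma vanish_from_shiftPos {w : ℕ} (hw : 2 ≤ w) {S : Set C}
    (hS : IsOrthogonalCollection (w : ℤ) S) {S'' : Set C} (hsub'' : S'' ⊆ S)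
    {s : C} (hs : s ∈ S) {z : C}
    (hz : ExtClos ((fun x : C => x⟦(1 : ℤ)⟧) '' S'') z) : ∀ f : z ⟶ s, f = 0 := by
  refine extClos_hom_to_zero ?_ hz
  rintro _ ⟨s'', h'', rfl⟩ f
  have h1 : (shiftFunctorCompIsoId C (1 : ℤ) (-1 : ℤ) (by omega)).inv.app s'' ≫
      (shiftFunctor C (-1 : ℤ)).map f = 0 :=
    hS.shift_hom_eq_zero s'' (hsub'' h'') s hs (-1) (by omega) (by omega) _
  have h2 : (shiftFunctor C (-1 : ℤ)).map f = 0 := by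
    rw [← cancel_epi ((shiftFunctorCompIsoId C (1 : ℤ) (-1 : ℤ) (by omega)).inv.app s''), h1,
      comp_zero]
  apply (shiftFunctor C (-1 : ℤ)).map_injective
  rw [h2, Functor.map_zero]

/-- Maps from the extension closure of `Σ⁻¹ Σ S''` to `s ∈ S ∖ S''` vanish. -/
lemma vanish_from_shiftPosNeg {w : ℕ} {S : Set C}
    (hS : IsOrthogonalCollection (w : ℤ) S) {S'' : Set C} (hsub'' : S'' ⊆ S)
    {s : C} (hs : s ∈ S) (hs'' : s ∉ S'') {z : C}
    (hz : ExtClos ((fun x : C => x⟦(-1 : ℤ)⟧) '' ((fun x : C => x⟦(1 : ℤ)⟧) '' S'')) z) :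
    ∀ f : z ⟶ s, f = 0 := by
  refine extClos_hom_to_zero ?_ hz
  rintro _ ⟨_, ⟨s'', h'', rfl⟩, rfl⟩ f
  have h0 : (shiftFunctorCompIsoId C (1 : ℤ) (-1 : ℤ) (by omega)).inv.app s'' ≫ f = 0 :=
    hS.hom_eq_zero s'' (hsub'' h'') s hs (fun he => hs'' (he ▸ h'')) _
  rw [← cancel_epi ((shiftFunctorCompIsoId C (1 : ℤ) (-1 : ℤ) (by omega)).inv.app s''), h0,
    comp_zero]

end Statement19Helpers2

section Statement19Helpers3

open CategoryTheory.Pretriangulated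

set_option linter.unusedSectionVars false

/-- The key lemma for part (i): given a `(Σ⁻¹⟨S'⟩)`-cover triangle of `s ∈ S ∖ S'`,
the connecting map `h` is a `(Σ⟨Σ⁻¹S'⟩)`-envelope, `g ≠ 0`, and the cone is not
in `Σ⁻¹ S'`. -/
lemma statement19_part_i {w : ℕ} (hw : 2 ≤ w) {S : Set C}
    (hS : IsOrthogonalCollection (w : ℤ) S) {S' : Set C} (hsub' : S' ⊆ S)
    {s u t : C} (hs : s ∈ S) (hs' : s ∉ S')
    {τ : u ⟶ s} {g : s ⟶ t} {h : t ⟶ u⟦(1 : ℤ)⟧}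
    (hcov : IsCover (ShiftClos (-1) (ExtClos S')) τ)
    (hdt : Triangle.mk τ g h ∈ distTriang C) :
    IsEnvelope (ShiftClos 1 (ExtClos ((fun x : C => x⟦(-1 : ℤ)⟧) '' S'))) h ∧
      t ∉ (fun x : C => x⟦(-1 : ℤ)⟧) '' S' := by
  -- `u` lies in the extension closure of `Σ⁻¹ S'`
  obtain ⟨x, hx, ⟨e⟩⟩ := hcov.1.1
  have hu : ExtClos ((fun x : C => x⟦(-1 : ℤ)⟧) '' S') u := .iso e.symm (hx.shiftSet (-1))
  -- `g ≠ 0`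
  have hg : g ≠ 0 := by
    intro hg0
    obtain ⟨σ, hσ⟩ : ∃ σ : s ⟶ u, 𝟙 s = σ ≫ τ := Triangle.coyoneda_exact₂ _ hdt (𝟙 s)
      (by exact (Category.id_comp g).trans hg0)
    have hiso : IsIso (τ ≫ σ) := hcov.2 (τ ≫ σ) (by rw [Category.assoc, ← hσ, Category.comp_id])
    have hτ : IsIso τ :=
      isIso_two_sided τ (σ ≫ inv (τ ≫ σ)) σ
        (by rw [← Category.assoc, IsIso.hom_inv_id]) hσ.symm
    have hz : inv τ = 0 :=
      vanish_to_shiftNeg hw hS hsub' hs hu (inv τ)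
    have : 𝟙 s = 0 := by rw [← IsIso.inv_hom_id τ, hz, zero_comp]
    exact hS.id_ne_zero s hs this
  constructor
  · constructor
    · refine ⟨⟨u, hu, ⟨Iso.refl _⟩⟩, ?_⟩
      intro e' hXe' f
      obtain ⟨z, hz, ⟨ez⟩⟩ := hXe'
      have hgf : g ≫ f = 0 := by
        have h1 : (g ≫ f) ≫ ez.hom = 0 :=
          vanish_to_shiftNegShift hS hsub' hs hs' hz ((g ≫ f) ≫ ez.hom)
        have : g ≫ f = ((g ≫ f) ≫ ez.hom) ≫ ez.inv := by simp
        rw [this, h1, zero_comp]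
      obtain ⟨φ, hφ⟩ := Triangle.yoneda_exact₂ _ (rot_of_distTriang _ hdt) f hgf
      exact ⟨φ, hφ.symm⟩
    · intro φ hφ
      have hdt₂ := rot_of_distTriang _ (rot_of_distTriang _ hdt)
      obtain ⟨c, hc₁, hc₂⟩ : ∃ c : s⟦(1 : ℤ)⟧ ⟶ s⟦(1 : ℤ)⟧,
          (-(shiftFunctor C (1 : ℤ)).map τ) ≫ c = φ ≫ (-(shiftFunctor C (1 : ℤ)).map τ) ∧
          (-(shiftFunctor C (1 : ℤ)).map g) ≫ (shiftFunctor C (1 : ℤ)).map (𝟙 t) = c ≫ (-(shiftFunctor C (1 : ℤ)).map g) :=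
        Pretriangulated.complete_distinguished_triangle_morphism
        ((Triangle.mk τ g h).rotate.rotate) ((Triangle.mk τ g h).rotate.rotate)
        hdt₂ hdt₂ (𝟙 t) φ (by exact hφ.trans (Category.id_comp h).symm)
      have hcg : c ≫ (shiftFunctor C (1 : ℤ)).map g = (shiftFunctor C (1 : ℤ)).map g := by
        have h2 := hc₂
        rw [CategoryTheory.Functor.map_id, Category.comp_id, Preadditive.comp_neg, neg_inj] at h2
        exact h2.symm
      set ψ := (shiftFunctor C (1 : ℤ)).preimage c with hψdef
      have hψg : ψ ≫ g = g := by
        apply (shiftFunctor C (1 : ℤ)).map_injective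
        rw [Functor.map_comp, Functor.map_preimage]
        exact hcg
      have hψ0 : ψ ≠ 0 := fun h0 => hg (by rw [← hψg, h0, zero_comp])
      have hψiso : IsIso ψ := hS.isIso_of_ne_zero s hs ψ hψ0
      have hciso : IsIso c := by
        rw [← Functor.map_preimage (shiftFunctor C (1 : ℤ)) c]
        infer_instance
      exact Pretriangulated.isIso₂_of_isIso₁₃
        (T := (Triangle.mk τ g h).rotate.rotate) (T' := (Triangle.mk τ g h).rotate.rotate)
        { hom₁ := 𝟙 t, hom₂ := φ, hom₃ := c,
          comm₁ := by exact hφ.trans (Category.id_comp h).symm,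
          comm₂ := hc₁, comm₃ := hc₂ }
        hdt₂ hdt₂ (by exact IsIso.id t) hciso
  · rintro ⟨s₀, hs₀, ht⟩
    refine hg ?_
    have hz : ExtClos ((fun x : C => x⟦(-1 : ℤ)⟧) '' S') t := ht ▸ .of ⟨s₀, hs₀, rfl⟩
    exact vanish_to_shiftNeg hw hS hsub' hs hz g

/-- The key lemma for part (ii): given a `(Σ⟨S''⟩)`-envelope triangle of `s ∈ S ∖ S''`,
the map `a` is a `(Σ⁻¹⟨Σ S''⟩)`-cover, `b ≠ 0`, and `t` is not in `Σ S''`. -/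
lemma statement19_part_ii {w : ℕ} (hw : 2 ≤ w) {S : Set C}
    (hS : IsOrthogonalCollection (w : ℤ) S) {S'' : Set C} (hsub'' : S'' ⊆ S)
    {s u t : C} (hs : s ∈ S) (hs'' : s ∉ S'')
    {a : u ⟶ t} {b : t ⟶ s} {γ : s ⟶ u⟦(1 : ℤ)⟧}
    (henv : IsEnvelope (ShiftClos 1 (ExtClos S'')) γ)
    (hdt : Triangle.mk a b γ ∈ distTriang C) :
    IsCover (ShiftClos (-1) (ExtClos ((fun x : C => x⟦(1 : ℤ)⟧) '' S''))) a ∧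
      t ∉ (fun x : C => x⟦(1 : ℤ)⟧) '' S'' := by
  obtain ⟨x, hx, ⟨e⟩⟩ := henv.1.1
  have hu1 : ExtClos ((fun x : C => x⟦(1 : ℤ)⟧) '' S'') (u⟦(1 : ℤ)⟧) :=
    .iso e.symm (hx.shiftSet 1)
  have hb : b ≠ 0 := by
    intro hb0
    obtain ⟨r, hr⟩ : ∃ r : u⟦(1 : ℤ)⟧ ⟶ s, 𝟙 s = γ ≫ r :=
      Triangle.yoneda_exact₂ _ (rot_of_distTriang _ hdt) (𝟙 s)
      (by exact (Category.comp_id b).trans hb0)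
    -- hr : 𝟙 s = γ ≫ r
    have hiso : IsIso (r ≫ γ) := henv.2 (r ≫ γ) (by rw [← Category.assoc, ← hr, Category.id_comp])
    have hγ : IsIso γ :=
      isIso_two_sided γ r (inv (r ≫ γ) ≫ r) hr.symm
        (by rw [Category.assoc, IsIso.inv_hom_id])
    have hz : inv γ = 0 := vanish_from_shiftPos hw hS hsub'' hs hu1 (inv γ)
    have : 𝟙 s = 0 := by rw [← IsIso.hom_inv_id γ, hz, comp_zero]
    exact hS.id_ne_zero s hs this
  constructor
  · constructor
    · refine ⟨⟨u⟦(1 : ℤ)⟧, hu1, ⟨((shiftFunctorCompIsoId C (1 : ℤ) (-1 : ℤ)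
        (by omega)).app u).symm⟩⟩, ?_⟩
      intro v hYv f
      obtain ⟨y, hy, ⟨ev⟩⟩ := hYv
      have hv : ExtClos ((fun x : C => x⟦(-1 : ℤ)⟧) '' ((fun x : C => x⟦(1 : ℤ)⟧) '' S'')) v :=
        .iso ev.symm (hy.shiftSet (-1))
      have hfb : f ≫ b = 0 := vanish_from_shiftPosNeg hS hsub'' hs hs'' hv (f ≫ b)
      obtain ⟨φ, hφ⟩ := Triangle.coyoneda_exact₂ _ hdt f hfb
      exact ⟨φ, hφ.symm⟩
    · intro φ hφ
      obtain ⟨c, hc₁, hc₂⟩ : ∃ c : s ⟶ s, b ≫ c = 𝟙 t ≫ b ∧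
          γ ≫ (shiftFunctor C (1 : ℤ)).map φ = c ≫ γ :=
        Pretriangulated.complete_distinguished_triangle_morphism
        (Triangle.mk a b γ) (Triangle.mk a b γ) hdt hdt φ (𝟙 t)
        (by exact (Category.comp_id a).trans hφ.symm)
      -- hc₁ : b ≫ c = 𝟙 t ≫ b
      have hbc : b ≫ c = b := by simpa using hc₁
      have hc0 : c ≠ 0 := fun h0 => hb (by rw [← hbc, h0, comp_zero])
      have hciso : IsIso c := hS.isIso_of_ne_zero s hs c hc0
      exact Pretriangulated.isIso₁_of_isIso₂₃
        (T := Triangle.mk a b γ) (T' := Triangle.mk a b γ)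
        { hom₁ := φ, hom₂ := 𝟙 t, hom₃ := c,
          comm₁ := by exact (Category.comp_id a).trans hφ.symm,
          comm₂ := hc₁, comm₃ := hc₂ }
        hdt hdt (by exact IsIso.id t) hciso
  · rintro ⟨s₀, hs₀, ht⟩
    refine hb ?_
    have hz : ExtClos ((fun x : C => x⟦(1 : ℤ)⟧) '' S'') t := ht ▸ .of ⟨s₀, hs₀, rfl⟩
    exact vanish_from_shiftPos hw hS hsub'' hs hz b

end Statement19Helpers3

section Statement19Helpers4

open CategoryTheory.Pretriangulated

set_option linter.unusedSectionVars false

/-- Uniqueness of the cocone on an envelope: the third objects of two envelope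
triangles over the same object are isomorphic. -/
lemma statement19_env_uniq {X : C → Prop} {t₁ t₂ : C} (ht : t₁ = t₂)
    {u₁ u₂ s₁ s₂ : C}
    {τ₁ : u₁ ⟶ s₁} {g₁ : s₁ ⟶ t₁} {h₁ : t₁ ⟶ u₁⟦(1 : ℤ)⟧}
    {τ₂ : u₂ ⟶ s₂} {g₂ : s₂ ⟶ t₂} {h₂ : t₂ ⟶ u₂⟦(1 : ℤ)⟧}
    (he₁ : IsEnvelope X h₁) (he₂ : IsEnvelope X h₂)
    (hdt₁ : Triangle.mk τ₁ g₁ h₁ ∈ distTriang C)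
    (hdt₂ : Triangle.mk τ₂ g₂ h₂ ∈ distTriang C) : Nonempty (s₁ ≅ s₂) := by
  subst ht
  obtain ⟨α, hα⟩ := he₁.1.2 _ he₂.1.1 h₂
  obtain ⟨β, hβ⟩ := he₂.1.2 _ he₁.1.1 h₁
  have hab : IsIso (α ≫ β) := he₁.2 _ (by rw [← Category.assoc, hα, hβ])
  have hba : IsIso (β ≫ α) := he₂.2 _ (by rw [← Category.assoc, hβ, hα])
  have hαiso : IsIso α := isIso_two_sided α (β ≫ inv (α ≫ β)) (inv (β ≫ α) ≫ β)
    (by rw [← Category.assoc, IsIso.hom_inv_id]) (by rw [Category.assoc, IsIso.inv_hom_id])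
  obtain ⟨c, hc₁, hc₂⟩ : ∃ c : s₁⟦(1 : ℤ)⟧ ⟶ s₂⟦(1 : ℤ)⟧,
      (-(shiftFunctor C (1 : ℤ)).map τ₁) ≫ c = α ≫ (-(shiftFunctor C (1 : ℤ)).map τ₂) ∧
      (-(shiftFunctor C (1 : ℤ)).map g₁) ≫ (shiftFunctor C (1 : ℤ)).map (𝟙 _) = c ≫ (-(shiftFunctor C (1 : ℤ)).map g₂) :=
    Pretriangulated.complete_distinguished_triangle_morphism
    ((Triangle.mk τ₁ g₁ h₁).rotate.rotate) ((Triangle.mk τ₂ g₂ h₂).rotate.rotate)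
    (rot_of_distTriang _ (rot_of_distTriang _ hdt₁))
    (rot_of_distTriang _ (rot_of_distTriang _ hdt₂))
    (𝟙 _) α (by exact hα.trans (Category.id_comp _).symm)
  have hciso : IsIso c := Pretriangulated.isIso₃_of_isIso₁₂
    (T := (Triangle.mk τ₁ g₁ h₁).rotate.rotate) (T' := (Triangle.mk τ₂ g₂ h₂).rotate.rotate)
    { hom₁ := 𝟙 _, hom₂ := α, hom₃ := c,
      comm₁ := by exact hα.trans (Category.id_comp _).symm, comm₂ := hc₁, comm₃ := hc₂ }
    (rot_of_distTriang _ (rot_of_distTriang _ hdt₁))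
    (rot_of_distTriang _ (rot_of_distTriang _ hdt₂))
    (by exact IsIso.id _) hαiso
  exact ⟨(shiftFunctor C (1 : ℤ)).preimageIso
    (asIso (c : s₁⟦(1 : ℤ)⟧ ⟶ s₂⟦(1 : ℤ)⟧))⟩

/-- Uniqueness of the cone on a cover: the third objects of two cover triangles
over the same object are isomorphic. -/
lemma statement19_cov_uniq {X : C → Prop} {t₁ t₂ : C} (ht : t₁ = t₂)
    {u₁ u₂ s₁ s₂ : C}
    {a₁ : u₁ ⟶ t₁} {b₁ : t₁ ⟶ s₁} {γ₁ : s₁ ⟶ u₁⟦(1 : ℤ)⟧}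
    {a₂ : u₂ ⟶ t₂} {b₂ : t₂ ⟶ s₂} {γ₂ : s₂ ⟶ u₂⟦(1 : ℤ)⟧}
    (hc₁ : IsCover X a₁) (hc₂ : IsCover X a₂)
    (hdt₁ : Triangle.mk a₁ b₁ γ₁ ∈ distTriang C)
    (hdt₂ : Triangle.mk a₂ b₂ γ₂ ∈ distTriang C) : Nonempty (s₁ ≅ s₂) := by
  subst ht
  obtain ⟨φ, hφ⟩ := hc₂.1.2 _ hc₁.1.1 a₁
  obtain ⟨χ, hχ⟩ := hc₁.1.2 _ hc₂.1.1 a₂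
  have h1 : IsIso (φ ≫ χ) := hc₁.2 _ (by rw [Category.assoc, hχ, hφ])
  have h2 : IsIso (χ ≫ φ) := hc₂.2 _ (by rw [Category.assoc, hφ, hχ])
  have hφiso : IsIso φ := isIso_two_sided φ (χ ≫ inv (φ ≫ χ)) (inv (χ ≫ φ) ≫ χ)
    (by rw [← Category.assoc, IsIso.hom_inv_id]) (by rw [Category.assoc, IsIso.inv_hom_id])
  obtain ⟨c, hcc₁, hcc₂⟩ : ∃ c : s₁ ⟶ s₂, b₁ ≫ c = 𝟙 _ ≫ b₂ ∧
      γ₁ ≫ (shiftFunctor C (1 : ℤ)).map φ = c ≫ γ₂ :=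
    Pretriangulated.complete_distinguished_triangle_morphism
    (Triangle.mk a₁ b₁ γ₁) (Triangle.mk a₂ b₂ γ₂) hdt₁ hdt₂ φ (𝟙 _)
    (by exact (Category.comp_id _).trans hφ.symm)
  have hciso : IsIso c := Pretriangulated.isIso₃_of_isIso₁₂
    (T := Triangle.mk a₁ b₁ γ₁) (T' := Triangle.mk a₂ b₂ γ₂)
    { hom₁ := φ, hom₂ := 𝟙 _, hom₃ := c,
      comm₁ := by exact (Category.comp_id _).trans hφ.symm, comm₂ := hcc₁, comm₃ := hcc₂ }
    hdt₁ hdt₂ hφiso (by exact IsIso.id _)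
  exact ⟨asIso (c : s₁ ⟶ s₂)⟩

end Statement19Helpers4

/-- Let `w ≥ 2`, let `C` be `(-w)`-Calabi--Yau, `S` a `w`-orthogonal
collection, and `S', S'' ⊆ S` such that the left tilt `L_{S'}(S)` and the right tilt
`R_{S''}(S)` are defined (realised by the functions `L` and `R`).  Then (i) the right
tilt `R_{Σ⁻¹S'}(L_{S'}(S))` is defined and equals `S` up to isomorphism of objects,
and (ii) the left tilt `L_{ΣS''}(R_{S''}(S))` is defined and equals `S` up to
isomorphism of objects. -/
theorem statement19 {k : Type} [Field k] [Linear k C]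
    [EssentiallySmall.{v} C] [IsIdempotentComplete C]
    [∀ x y : C, FiniteDimensional k (x ⟶ y)]
    (w : ℕ) (hw : 2 ≤ w) (hCY : IsNegativeCalabiYau k C (w : ℤ))
    (S : Set C) (hS : IsOrthogonalCollection (w : ℤ) S)
    (S' S'' : Set C) (hsub' : S' ⊆ S) (hsub'' : S'' ⊆ S)
    (L : C → C) (hL : IsLeftTilt S' S L)
    (R : C → C) (hR : IsRightTilt S'' S R) :
    (∃ R' : C → C, IsRightTilt ((fun s : C => s⟦(-1 : ℤ)⟧) '' S') (L '' S) R' ∧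
      ∀ s ∈ S, Nonempty (R' (L s) ≅ s)) ∧
    (∃ L' : C → C, IsLeftTilt ((fun s : C => s⟦(1 : ℤ)⟧) '' S'') (R '' S) L' ∧
      ∀ s ∈ S, Nonempty (L' (R s) ≅ s)) := by
    classical
  constructor
  · -- part (i): the right tilt of the left tilt
    refine ⟨fun t => if hex : ∃ s₁, (s₁ ∈ S ∧ s₁ ∉ S') ∧ L s₁ = t then hex.choose
      else t⟦(1 : ℤ)⟧, ?_, ?_⟩
    · rintro t ⟨s, hsS, rfl⟩
      by_cases hex : ∃ s₁, (s₁ ∈ S ∧ s₁ ∉ S') ∧ L s₁ = L s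
      · simp only [dif_pos hex]
        obtain ⟨⟨h1S, h1'⟩, hLs₁⟩ := hex.choose_spec
        generalize hex.choose = s₁ at h1S h1' hLs₁ ⊢
        rw [← hLs₁]
        rcases hL _ h1S with ⟨h1, _⟩ | ⟨_, u, τ, g, h, hcov, hdt⟩
        · exact absurd h1 h1'
        obtain ⟨henv, hnm⟩ := statement19_part_i hw hS hsub' h1S h1' hcov hdt
        exact Or.inr ⟨hnm, u, τ, g, h, henv, hdt⟩
      · simp only [dif_neg hex]
        have hsS' : s ∈ S' := by
          by_contra hs'
          exact hex ⟨s, ⟨hsS, hs'⟩, rfl⟩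
        rcases hL s hsS with ⟨_, heq⟩ | ⟨hns, _⟩
        · exact Or.inl ⟨⟨s, hsS', heq.symm⟩, rfl⟩
        · exact absurd hsS' hns
    · intro s hsS
      by_cases hex : ∃ s₁, (s₁ ∈ S ∧ s₁ ∉ S') ∧ L s₁ = L s
      · simp only [dif_pos hex]
        obtain ⟨⟨h1S, h1'⟩, hLs₁⟩ := hex.choose_spec
        rcases hL _ h1S with ⟨h1, _⟩ | ⟨_, u₁, τ₁, g₁, h₁, hcov₁, hdt₁⟩
        · exact absurd h1 h1'
        obtain ⟨henv₁, hnm₁⟩ := statement19_part_i hw hS hsub' h1S h1' hcov₁ hdt₁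
        by_cases hs' : s ∈ S'
        · rcases hL s hsS with ⟨_, heq⟩ | ⟨hns, _⟩
          · exact absurd (show L hex.choose ∈ (fun x : C => x⟦(-1 : ℤ)⟧) '' S' from by
              rw [hLs₁, heq]; exact ⟨s, hs', rfl⟩) hnm₁
          · exact absurd hs' hns
        · rcases hL s hsS with ⟨c1, _⟩ | ⟨_, u₂, τ₂, g₂, h₂, hcov₂, hdt₂⟩
          · exact absurd c1 hs'
          obtain ⟨henv₂, _⟩ := statement19_part_i hw hS hsub' hsS hs' hcov₂ hdt₂
          exact statement19_env_uniq hLs₁ henv₁ henv₂ hdt₁ hdt₂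
      · simp only [dif_neg hex]
        have hsS' : s ∈ S' := by
          by_contra hs'
          exact hex ⟨s, ⟨hsS, hs'⟩, rfl⟩
        rcases hL s hsS with ⟨_, heq⟩ | ⟨hns, _⟩
        · rw [heq]
          exact ⟨(shiftFunctorCompIsoId C (-1 : ℤ) (1 : ℤ) (by omega)).app s⟩
        · exact absurd hsS' hns
  · -- part (ii): the left tilt of the right tilt
    refine ⟨fun t => if hex : ∃ s₁, (s₁ ∈ S ∧ s₁ ∉ S'') ∧ R s₁ = t then hex.choose
      else t⟦(-1 : ℤ)⟧, ?_, ?_⟩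
    · rintro t ⟨s, hsS, rfl⟩
      by_cases hex : ∃ s₁, (s₁ ∈ S ∧ s₁ ∉ S'') ∧ R s₁ = R s
      · simp only [dif_pos hex]
        obtain ⟨⟨h1S, h1''⟩, hRs₁⟩ := hex.choose_spec
        generalize hex.choose = s₁ at h1S h1'' hRs₁ ⊢
        rw [← hRs₁]
        rcases hR _ h1S with ⟨h1, _⟩ | ⟨_, u, a, b, γ, henv, hdt⟩
        · exact absurd h1 h1''
        obtain ⟨hcov, hnm⟩ := statement19_part_ii hw hS hsub'' h1S h1'' henv hdt
        exact Or.inr ⟨hnm, u, a, b, γ, hcov, hdt⟩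
      · simp only [dif_neg hex]
        have hsS'' : s ∈ S'' := by
          by_contra hs''
          exact hex ⟨s, ⟨hsS, hs''⟩, rfl⟩
        rcases hR s hsS with ⟨_, heq⟩ | ⟨hns, _⟩
        · exact Or.inl ⟨⟨s, hsS'', heq.symm⟩, rfl⟩
        · exact absurd hsS'' hns
    · intro s hsS
      by_cases hex : ∃ s₁, (s₁ ∈ S ∧ s₁ ∉ S'') ∧ R s₁ = R s
      · simp only [dif_pos hex]
        obtain ⟨⟨h1S, h1''⟩, hRs₁⟩ := hex.choose_spec
        rcases hR _ h1S with ⟨h1, _⟩ | ⟨_, u₁, a₁, b₁, γ₁, henv₁, hdt₁⟩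
        · exact absurd h1 h1''
        obtain ⟨hcov₁, hnm₁⟩ := statement19_part_ii hw hS hsub'' h1S h1'' henv₁ hdt₁
        by_cases hs'' : s ∈ S''
        · rcases hR s hsS with ⟨_, heq⟩ | ⟨hns, _⟩
          · exact absurd (show R hex.choose ∈ (fun x : C => x⟦(1 : ℤ)⟧) '' S'' from by
              rw [hRs₁, heq]; exact ⟨s, hs'', rfl⟩) hnm₁
          · exact absurd hs'' hns
        · rcases hR s hsS with ⟨c1, _⟩ | ⟨_, u₂, a₂, b₂, γ₂, henv₂, hdt₂⟩
          · exact absurd c1 hs''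
          obtain ⟨hcov₂, _⟩ := statement19_part_ii hw hS hsub'' hsS hs'' henv₂ hdt₂
          exact statement19_cov_uniq hRs₁ hcov₁ hcov₂ hdt₁ hdt₂
      · simp only [dif_neg hex]
        have hsS'' : s ∈ S'' := by
          by_contra hs''
          exact hex ⟨s, ⟨hsS, hs''⟩, rfl⟩
        rcases hR s hsS with ⟨_, heq⟩ | ⟨hns, _⟩
        · rw [heq]
          exact ⟨(shiftFunctorCompIsoId C (1 : ℤ) (-1 : ℤ) (by omega)).app s⟩
        · exact absurd hsS'' hns
end
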